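/- arXiv:2206.08594 — 9 statements merged into one kernel-verified Lean document; each statement's English description precedes it below -/
import Mathlib

section
/- The minimizers ω_m of the expected m-step solution error converge to the reciprocal of the smaller eigenvalue: lim_{m→∞} ω_m = 1/μ1. -/
/-- Minimizer of the expected `m`-step solution error in the two-task Jacobi setting. -/
noncomputable def omegaM (p c1 c2 μ1 μ2 l1 l2 m : ℝ) : ℝ :=
  (p * c1 ^ 2 * μ1 * l1 ^ (2 * m) + (1 - p) * c2 ^ 2 * μ2 * l2 ^ (2 * m)) /
  (p * c1 ^ 2 * μ1 ^ 2 * l1 ^ (2 * m) + (1 - p) * c2 ^ 2 * μ2 ^ 2 * l2 ^ (2 * m))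

/-- The minimizers `ω_m` converge to `1/μ1` as `m → ∞`. -/
theorem omegaM_tendsto (μ1 μ2 l1 l2 c1 c2 p : ℝ)
    (hμ1 : 0 < μ1) (hμ12 : μ1 < μ2) (hμ2 : μ2 < 2)
    (hl1 : l1 = 1 - μ1 / 2) (hl2 : l2 = 1 - μ2 / 2)
    (hc1 : 0 < c1) (hc2 : 0 < c2) (hp0 : 0 < p) (hp1 : p < 1) :
    Filter.Tendsto (fun m : ℝ => omegaM p c1 c2 μ1 μ2 l1 l2 m)
      Filter.atTop (nhds (1 / μ1)) := by
  have hμ2pos : 0 < μ2 := lt_trans hμ1 hμ12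
  have hp' : 0 < 1 - p := by linarith
  have hl1pos : 0 < l1 := by rw [hl1]; linarith
  have hl2pos : 0 < l2 := by rw [hl2]; linarith
  have hq0 : 0 < l2 / l1 := div_pos hl2pos hl1pos
  have hq1 : l2 / l1 < 1 := by
    rw [div_lt_one hl1pos, hl1, hl2]; linarith
  set A := p * c1 ^ 2 * μ1 with hAdef
  set B := (1 - p) * c2 ^ 2 * μ2 with hBdef
  set C := p * c1 ^ 2 * μ1 ^ 2 with hCdef
  set D := (1 - p) * c2 ^ 2 * μ2 ^ 2 with hDdef
  have hA : 0 < A := mul_pos (mul_pos hp0 (pow_pos hc1 2)) hμ1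
  have hB : 0 < B := mul_pos (mul_pos hp' (pow_pos hc2 2)) hμ2pos
  have hC : 0 < C := mul_pos (mul_pos hp0 (pow_pos hc1 2)) (pow_pos hμ1 2)
  have hD : 0 < D := mul_pos (mul_pos hp' (pow_pos hc2 2)) (pow_pos hμ2pos 2)
  have ht : Filter.Tendsto (fun m : ℝ => (l2 / l1) ^ (2 * m)) Filter.atTop (nhds 0) := by
    have hbase : Filter.Tendsto (fun x : ℝ => (l2 / l1) ^ x) Filter.atTop (nhds 0) :=
      tendsto_rpow_atTop_of_base_lt_one _ (by linarith) hq1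
    have h2m : Filter.Tendsto (fun m : ℝ => 2 * m) Filter.atTop Filter.atTop :=
      Filter.tendsto_atTop_atTop.mpr (fun b => ⟨b/2, fun a ha => by linarith⟩)
    exact hbase.comp h2m
  have hmain : Filter.Tendsto (fun m : ℝ => (A + B * (l2 / l1) ^ (2 * m)) /
      (C + D * (l2 / l1) ^ (2 * m))) Filter.atTop (nhds ((A + B * 0) / (C + D * 0))) := by
    apply Filter.Tendsto.div
    · exact (tendsto_const_nhds.add (tendsto_const_nhds.mul ht))
    · exact (tendsto_const_nhds.add (tendsto_const_nhds.mul ht))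
    · simp; exact ne_of_gt hC
  have hlim : (A + B * 0) / (C + D * 0) = 1 / μ1 := by
    rw [hAdef, hCdef]
    field_simp
    ring
  rw [hlim] at hmain
  refine hmain.congr (fun m => ?_)
  have hL1 : (0:ℝ) < l1 ^ (2 * m) := Real.rpow_pos_of_pos hl1pos _
  have hL2 : (0:ℝ) < l2 ^ (2 * m) := Real.rpow_pos_of_pos hl2pos _
  have hqeq : (l2 / l1) ^ (2 * m) = l2 ^ (2 * m) / l1 ^ (2 * m) :=
    Real.div_rpow hl2pos.le hl1pos.le _
  show (A + B * (l2 / l1) ^ (2 * m)) / (C + D * (l2 / l1) ^ (2 * m)) =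
    omegaM p c1 c2 μ1 μ2 l1 l2 m
  rw [hqeq]
  unfold omegaM
  rw [← hAdef, ← hBdef, ← hCdef, ← hDdef]
  have hden : 0 < C * l1 ^ (2 * m) + D * l2 ^ (2 * m) :=
    add_pos (mul_pos hC hL1) (mul_pos hD hL2)
  rw [div_eq_div_iff]
  · field_simp
  · have : 0 < C + D * (l2 ^ (2 * m) / l1 ^ (2 * m)) :=
      add_pos hC (mul_pos hD (div_pos hL2 hL1))
    linarith
  · positivity
end

section
/- The map m ↦ ω_m is strictly increasing on [0, ∞): for all real 0 ≤ m1 < m2 one has ω_{m1} < ω_{m2}. -/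
/-- The map `m ↦ ω_m` is strictly increasing on `[0, ∞)`. -/
theorem omegaM_strictMono (μ1 μ2 l1 l2 c1 c2 p : ℝ)
    (hμ1 : 0 < μ1) (hμ12 : μ1 < μ2) (hμ2 : μ2 < 2)
    (hl1 : l1 = 1 - μ1 / 2) (hl2 : l2 = 1 - μ2 / 2)
    (hc1 : 0 < c1) (hc2 : 0 < c2) (hp0 : 0 < p) (hp1 : p < 1) :
    ∀ m1 m2 : ℝ, 0 ≤ m1 → m1 < m2 →
      omegaM p c1 c2 μ1 μ2 l1 l2 m1 < omegaM p c1 c2 μ1 μ2 l1 l2 m2 := by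
  intro m1 m2 hm1 hm12
  have hl1pos : 0 < l1 := by rw [hl1]; linarith
  have hl2pos : 0 < l2 := by rw [hl2]; linarith
  have hl21 : l2 < l1 := by rw [hl1, hl2]; linarith
  set a1 := l1 ^ (2 * m1) with ha1
  set a2 := l1 ^ (2 * m2) with ha2
  set b1 := l2 ^ (2 * m1) with hb1
  set b2 := l2 ^ (2 * m2) with hb2
  have ha1p : 0 < a1 := Real.rpow_pos_of_pos hl1pos _
  have ha2p : 0 < a2 := Real.rpow_pos_of_pos hl1pos _
  have hb1p : 0 < b1 := Real.rpow_pos_of_pos hl2pos _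
  have hb2p : 0 < b2 := Real.rpow_pos_of_pos hl2pos _
  have hkey : a1 * b2 < a2 * b1 := by
    have hΔ : 0 < 2 * (m2 - m1) := by linarith
    have h1 : a2 = a1 * l1 ^ (2 * (m2 - m1)) := by
      rw [ha1, ha2, ← Real.rpow_add hl1pos]; ring_nf
    have h2 : b2 = b1 * l2 ^ (2 * (m2 - m1)) := by
      rw [hb1, hb2, ← Real.rpow_add hl2pos]; ring_nf
    have h3 : l2 ^ (2 * (m2 - m1)) < l1 ^ (2 * (m2 - m1)) :=
      Real.rpow_lt_rpow hl2pos.le hl21 hΔ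
    rw [h1, h2]
    nlinarith [mul_pos ha1p hb1p]
  have hA : 0 < p * c1 ^ 2 := by positivity
  have hB : 0 < (1 - p) * c2 ^ 2 := by
    have : 0 < 1 - p := by linarith
    positivity
  have hD1 : 0 < p * c1 ^ 2 * μ1 ^ 2 * a1 + (1 - p) * c2 ^ 2 * μ2 ^ 2 * b1 := by
    have h2 : 0 < μ2 := by linarith
    positivity
  have hD2 : 0 < p * c1 ^ 2 * μ1 ^ 2 * a2 + (1 - p) * c2 ^ 2 * μ2 ^ 2 * b2 := by
    have h2 : 0 < μ2 := by linarith
    positivity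
  rw [omegaM, omegaM, div_lt_div_iff₀ hD1 hD2]
  have hμ2p : 0 < μ2 := by linarith
  nlinarith [mul_pos (mul_pos (mul_pos (mul_pos (mul_pos hA hB) hμ1) hμ2p)
    (sub_pos.mpr hkey)) (sub_pos.mpr hμ12)]
end

section
/- Assume 0 < ε < c1·c2·(μ2 − μ1)/(c1·μ1 + c2·μ2). Then E_ε is strictly decreasing on (−∞, ω_(ε,2)]: for all real ω < ω' ≤ ω_(ε,2), one has E_ε(ω) > E_ε(ω'). -/
/-- Relaxed iteration count of a single task with constant `c`, eigenvalue `μ`,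
contraction factor `lam`, at initial-guess coefficient `ω`. -/
noncomputable def Leps (ε c μ lam ω : ℝ) : ℝ :=
  if ω * μ = 1 then 0
  else max 0 (Real.log (ε / (c * |ω * μ - 1|)) / Real.log lam)

/-- Expected relaxed iteration count over the two tasks. -/
noncomputable def Eeps (p ε c1 c2 μ1 μ2 l1 l2 ω : ℝ) : ℝ :=
  p * Leps ε c1 μ1 l1 ω + (1 - p) * Leps ε c2 μ2 l2 ω

/-- `ω_(ε,1) = 1/μ1 − ε/(c1·μ1)`. -/
noncomputable def omegaE1 (ε c1 μ1 : ℝ) : ℝ := 1 / μ1 - ε / (c1 * μ1)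

/-- `ω_(ε,2) = 1/μ2 + ε/(c2·μ2)`. -/
noncomputable def omegaE2 (ε c2 μ2 : ℝ) : ℝ := 1 / μ2 + ε / (c2 * μ2)

/-- Threshold probability `p_ε`. -/
noncomputable def pEps (ε c1 c2 μ1 μ2 l1 l2 : ℝ) : ℝ :=
  Leps ε c2 μ2 l2 (omegaE1 ε c1 μ1) /
  (Leps ε c1 μ1 l1 (omegaE2 ε c2 μ2) + Leps ε c2 μ2 l2 (omegaE1 ε c1 μ1))

/-- Limiting threshold probability `p_0`. -/
noncomputable def pZero (l1 l2 : ℝ) : ℝ :=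
  Real.log l1 / (Real.log l1 + Real.log l2)

lemma Leps_nonneg (ε c μ lam ω : ℝ) : 0 ≤ Leps ε c μ lam ω := by
  unfold Leps; split_ifs
  · exact le_refl 0
  · exact le_max_left _ _

lemma Leps_lt (ε c μ lam ω ω' : ℝ) (hε : 0 < ε) (hc : 0 < c) (hμ : 0 < μ)
    (hlam0 : 0 < lam) (hlam1 : lam < 1) (hωω : ω < ω')
    (h : ε / c < 1 - ω' * μ) :
    Leps ε c μ lam ω' < Leps ε c μ lam ω := by
  have hεc : 0 < ε / c := div_pos hε hc
  have hb : 0 < 1 - ω' * μ := lt_trans hεc h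
  have ha : 1 - ω' * μ < 1 - ω * μ := by nlinarith
  have hne' : ω' * μ ≠ 1 := by intro hh; rw [hh] at hb; linarith
  have hne : ω * μ ≠ 1 := by intro hh; rw [hh] at ha; linarith
  have hloglam : Real.log lam < 0 := Real.log_neg hlam0 hlam1
  have habs' : |ω' * μ - 1| = 1 - ω' * μ := by rw [abs_of_neg (by linarith)]; ring
  have habs : |ω * μ - 1| = 1 - ω * μ := by rw [abs_of_neg (by linarith)]; ring
  unfold Leps
  rw [if_neg hne, if_neg hne', habs, habs']
  have hApos : 0 < ε / (c * (1 - ω * μ)) := div_pos hε (mul_pos hc (by linarith))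
  have hBpos : 0 < ε / (c * (1 - ω' * μ)) := div_pos hε (mul_pos hc hb)
  have hB1 : ε / (c * (1 - ω' * μ)) < 1 := by
    rw [div_lt_one (mul_pos hc hb)]
    have := (div_lt_iff₀ hc).mp h
    nlinarith
  have hAB : ε / (c * (1 - ω * μ)) < ε / (c * (1 - ω' * μ)) :=
    div_lt_div_of_pos_left hε (mul_pos hc hb) (by nlinarith)
  have hlogB : Real.log (ε / (c * (1 - ω' * μ))) < 0 := Real.log_neg hBpos hB1
  have hlogA : Real.log (ε / (c * (1 - ω * μ))) < Real.log (ε / (c * (1 - ω' * μ))) :=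
    Real.log_lt_log hApos hAB
  have hdiv : Real.log (ε / (c * (1 - ω' * μ))) / Real.log lam <
      Real.log (ε / (c * (1 - ω * μ))) / Real.log lam :=
    (div_lt_div_right_of_neg hloglam).mpr hlogA
  have hBq : 0 ≤ Real.log (ε / (c * (1 - ω' * μ))) / Real.log lam :=
    le_of_lt (div_pos_of_neg_of_neg hlogB hloglam)
  rw [max_eq_right hBq, max_eq_right (le_of_lt (lt_of_le_of_lt hBq hdiv))]
  exact hdiv

lemma Leps_le (ε c μ lam ω ω' : ℝ) (hε : 0 < ε) (hc : 0 < c) (hμ : 0 < μ)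
    (hlam0 : 0 < lam) (hlam1 : lam < 1) (hωω : ω ≤ ω')
    (h : ω' * μ - 1 ≤ ε / c) :
    Leps ε c μ lam ω' ≤ Leps ε c μ lam ω := by
  have hloglam : Real.log lam < 0 := Real.log_neg hlam0 hlam1
  rcases lt_trichotomy (ω' * μ) 1 with hlt | heq | hgt
  · have hb : 0 < 1 - ω' * μ := by linarith
    have ha : 1 - ω' * μ ≤ 1 - ω * μ := by nlinarith
    have hne' : ω' * μ ≠ 1 := ne_of_lt hlt
    have hne : ω * μ ≠ 1 := by nlinarith
    have habs' : |ω' * μ - 1| = 1 - ω' * μ := by rw [abs_of_neg (by linarith)]; ring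
    have habs : |ω * μ - 1| = 1 - ω * μ := by rw [abs_of_neg (by linarith)]; ring
    unfold Leps
    rw [if_neg hne, if_neg hne', habs, habs']
    apply max_le_max (le_refl 0)
    apply (div_le_div_right_of_neg hloglam).mpr
    apply Real.log_le_log (div_pos hε (mul_pos hc (by linarith)))
    apply div_le_div_of_nonneg_left hε.le (mul_pos hc hb)
    nlinarith
  · have : Leps ε c μ lam ω' = 0 := by unfold Leps; rw [if_pos heq]
    rw [this]; exact Leps_nonneg _ _ _ _ _
  · have hb : 0 < ω' * μ - 1 := by linarith
    have hne' : ω' * μ ≠ 1 := ne_of_gt hgt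
    have habs' : |ω' * μ - 1| = ω' * μ - 1 := abs_of_pos hb
    have h1 : (1:ℝ) ≤ ε / (c * (ω' * μ - 1)) := by
      rw [le_div_iff₀ (mul_pos hc hb)]
      have := (le_div_iff₀ hc).mp h
      nlinarith
    have hlog : 0 ≤ Real.log (ε / (c * (ω' * μ - 1))) := Real.log_nonneg h1
    have : Leps ε c μ lam ω' = 0 := by
      unfold Leps
      rw [if_neg hne', habs']
      exact max_eq_left (div_nonpos_of_nonneg_of_nonpos hlog hloglam.le)
    rw [this]; exact Leps_nonneg _ _ _ _ _

/-- For `0 < ε < c1·c2·(μ2−μ1)/(c1·μ1+c2·μ2)`, the expected iteration count `E_ε`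
is strictly decreasing on `(−∞, ω_(ε,2)]`. -/
theorem Eeps_strictAnti_left (μ1 μ2 l1 l2 c1 c2 p : ℝ)
    (hμ1 : 0 < μ1) (hμ12 : μ1 < μ2) (hμ2 : μ2 < 2)
    (hl1 : l1 = 1 - μ1 / 2) (hl2 : l2 = 1 - μ2 / 2)
    (hc1 : 0 < c1) (hc2 : 0 < c2) (hp0 : 0 < p) (hp1 : p < 1)
    (ε : ℝ) (hε : 0 < ε)
    (hεlt : ε < c1 * c2 * (μ2 - μ1) / (c1 * μ1 + c2 * μ2)) :
    ∀ ω ω' : ℝ, ω < ω' → ω' ≤ omegaE2 ε c2 μ2 →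
      Eeps p ε c1 c2 μ1 μ2 l1 l2 ω > Eeps p ε c1 c2 μ1 μ2 l1 l2 ω' := by
  intro ω ω' hlt hle
  have hμ2pos : 0 < μ2 := lt_trans hμ1 hμ12
  have hμ1lt2 : μ1 < 2 := lt_trans hμ12 hμ2
  have hl1pos : 0 < l1 := by rw [hl1]; linarith
  have hl1lt : l1 < 1 := by rw [hl1]; linarith
  have hl2pos : 0 < l2 := by rw [hl2]; linarith
  have hl2lt : l2 < 1 := by rw [hl2]; linarith
  have hD : 0 < c1 * μ1 + c2 * μ2 := by positivity
  have hεlt' : ε * (c1 * μ1 + c2 * μ2) < c1 * c2 * (μ2 - μ1) := (lt_div_iff₀ hD).mp hεlt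
  rw [omegaE2] at hle
  have h2' : ω' * (c2 * μ2) ≤ c2 + ε := by
    have := mul_le_mul_of_nonneg_right hle (mul_pos hc2 hμ2pos).le
    have heq : (1 / μ2 + ε / (c2 * μ2)) * (c2 * μ2) = c2 + ε := by
      field_simp
    linarith [heq ▸ this]
  have hkey : ε / c1 < 1 - ω' * μ1 := by
    rw [div_lt_iff₀ hc1]
    nlinarith [mul_le_mul_of_nonneg_left h2' (mul_pos hc1 hμ1).le, mul_pos hc2 hμ2pos]
  have hL1 : Leps ε c1 μ1 l1 ω' < Leps ε c1 μ1 l1 ω :=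
    Leps_lt ε c1 μ1 l1 ω ω' hε hc1 hμ1 hl1pos hl1lt hlt hkey
  have h2'' : ω' * μ2 - 1 ≤ ε / c2 := by
    rw [le_div_iff₀ hc2]; nlinarith
  have hL2 : Leps ε c2 μ2 l2 ω' ≤ Leps ε c2 μ2 l2 ω :=
    Leps_le ε c2 μ2 l2 ω ω' hε hc2 hμ2pos hl2pos hl2lt hlt.le h2''
  unfold Eeps
  nlinarith [mul_lt_mul_of_pos_left hL1 hp0,
    mul_le_mul_of_nonneg_left hL2 (by linarith : (0:ℝ) ≤ 1 - p)]
end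

section
/- The function G(ω) = p·log(ε/(c1·(1 − ω·μ1)))/log λ1 + (1−p)·log(ε/(c2·(ω·μ2 − 1)))/log λ2 is strictly concave on the open interval (1/μ2, 1/μ1), for every ε > 0. -/
private lemma myCongr {s : Set ℝ} {f g : ℝ → ℝ} (h : StrictConcaveOn ℝ s f)
    (heq : ∀ x ∈ s, f x = g x) : StrictConcaveOn ℝ s g := by
  refine ⟨h.1, fun x hx y hy hxy a b ha hb hab => ?_⟩
  rw [← heq x hx, ← heq y hy, ← heq _ (h.1 hx hy ha.le hb.le hab)]
  exact h.2 hx hy hxy ha hb hab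

private lemma mySmul {s : Set ℝ} {f : ℝ → ℝ} (h : StrictConcaveOn ℝ s f)
    {c : ℝ} (hc : 0 < c) : StrictConcaveOn ℝ s (fun x => c * f x) := by
  refine ⟨h.1, fun x hx y hy hxy a b ha hb hab => ?_⟩
  have := h.2 hx hy hxy ha hb hab
  simp only [smul_eq_mul] at *
  nlinarith

private lemma myLogAffine {s : Set ℝ} (hs : Convex ℝ s) {k m : ℝ} (hm : m ≠ 0)
    (hpos : ∀ x ∈ s, 0 < k + m * x) :
    StrictConcaveOn ℝ s (fun x => Real.log (k + m * x)) := by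
  refine ⟨hs, fun x hx y hy hxy a b ha hb hab => ?_⟩
  have h1 := hpos x hx
  have h2 := hpos y hy
  have hne : k + m * x ≠ k + m * y := by
    intro h; apply hxy; have : m * x = m * y := by linarith
    exact mul_left_cancel₀ hm this
  have h := strictConcaveOn_log_Ioi.2 (Set.mem_Ioi.2 h1) (Set.mem_Ioi.2 h2) hne ha hb hab
  have harg : a • (k + m * x) + b • (k + m * y) = k + m * (a • x + b • y) := by
    simp only [smul_eq_mul]; linear_combination k * hab
  rwa [harg] at h

/-- On the interval `(1/μ2, 1/μ1)`, the expected relaxed iteration count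
`G(ω) = p·log(ε/(c1·(1−ω·μ1)))/log λ1 + (1−p)·log(ε/(c2·(ω·μ2−1)))/log λ2`
is strictly concave. -/
theorem Eeps_strictConcaveOn (μ1 μ2 l1 l2 c1 c2 p : ℝ)
    (hμ1 : 0 < μ1) (hμ12 : μ1 < μ2) (hμ2 : μ2 < 2)
    (hl1 : l1 = 1 - μ1 / 2) (hl2 : l2 = 1 - μ2 / 2)
    (hc1 : 0 < c1) (hc2 : 0 < c2) (hp0 : 0 < p) (hp1 : p < 1)
    (ε : ℝ) (hε : 0 < ε) :
    StrictConcaveOn ℝ (Set.Ioo (1 / μ2) (1 / μ1))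
      (fun ω : ℝ =>
        p * (Real.log (ε / (c1 * (1 - ω * μ1))) / Real.log l1) +
        (1 - p) * (Real.log (ε / (c2 * (ω * μ2 - 1))) / Real.log l2)) := by
  have hμ2pos : 0 < μ2 := hμ1.trans hμ12
  have hL1 : Real.log l1 < 0 := by
    apply Real.log_neg <;> rw [hl1] <;> linarith
  have hL2 : Real.log l2 < 0 := by
    apply Real.log_neg <;> rw [hl2] <;> linarith
  set s := Set.Ioo (1 / μ2) (1 / μ1) with hs
  have hpos1 : ∀ x ∈ s, 0 < 1 + (-μ1) * x := by
    intro x hx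
    have := hx.2
    have : x * μ1 < 1 := by
      calc x * μ1 < (1 / μ1) * μ1 := by exact mul_lt_mul_of_pos_right this hμ1
        _ = 1 := by field_simp
    linarith
  have hpos2 : ∀ x ∈ s, 0 < (-1) + μ2 * x := by
    intro x hx
    have := hx.1
    have : 1 < x * μ2 := by
      calc (1:ℝ) = (1 / μ2) * μ2 := by field_simp
        _ < x * μ2 := by exact mul_lt_mul_of_pos_right this hμ2pos
    linarith
  have hf1 : StrictConcaveOn ℝ s (fun x => Real.log (1 + (-μ1) * x)) :=
    myLogAffine (convex_Ioo _ _) (by intro h; nlinarith [h] : (-μ1 : ℝ) ≠ 0) hpos1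
  have hf2 : StrictConcaveOn ℝ s (fun x => Real.log ((-1) + μ2 * x)) :=
    myLogAffine (convex_Ioo _ _) (by positivity : (0:ℝ) < μ2).ne' hpos2
  have ha1 : 0 < -(p / Real.log l1) := by
    rw [neg_pos]; exact div_neg_of_pos_of_neg hp0 hL1
  have hb1 : 0 < -((1 - p) / Real.log l2) := by
    rw [neg_pos]; exact div_neg_of_pos_of_neg (by linarith) hL2
  set C : ℝ := p / Real.log l1 * (Real.log ε - Real.log c1) +
      (1 - p) / Real.log l2 * (Real.log ε - Real.log c2) with hC
  have h := (((mySmul hf1 ha1).add (mySmul hf2 hb1)).add_const C)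
  refine myCongr h ?_
  intro x hx
  have h1 := hpos1 x hx
  have h2 := hpos2 x hx
  have e1 : 1 - x * μ1 = 1 + (-μ1) * x := by ring
  have e2 : x * μ2 - 1 = (-1) + μ2 * x := by ring
  simp only [Pi.add_apply]
  rw [e1, e2, Real.log_div hε.ne' (mul_pos hc1 h1).ne',
      Real.log_div hε.ne' (mul_pos hc2 h2).ne',
      Real.log_mul hc1.ne' h1.ne', Real.log_mul hc2.ne' h2.ne']
  field_simp
  ring
end

section
/- Assume 0 < ε < c1·c2·(μ2 − μ1)/(c1·μ1 + c2·μ2). If p > p_ε then E_ε attains its minimum over ℝ uniquely at ω_(ε,1), i.e. E_ε(ω) > E_ε(ω_(ε,1)) for all ω ≠ ω_(ε,1); if p < p_ε then E_ε attains its minimum uniquely at ω_(ε,2); and if p = p_ε then both ω_(ε,1) and ω_(ε,2) minimize E_ε over ℝ. -/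
lemma Leps_eq_zero {ε c lam : ℝ} (hε : 0 < ε) (hc : 0 < c) (hlam : 0 < lam) (hlam1 : lam < 1)
    {ω μ : ℝ} (h : |ω * μ - 1| ≤ ε / c) : Leps ε c μ lam ω = 0 := by
  unfold Leps
  split
  · rfl
  · rename_i hne
    have hd : 0 < |ω * μ - 1| := abs_pos.mpr (sub_ne_zero.mpr hne)
    have h1 : 1 ≤ ε / (c * |ω * μ - 1|) := by
      rw [le_div_iff₀ (by positivity), one_mul]
      calc c * |ω * μ - 1| ≤ c * (ε / c) := by nlinarith
        _ = ε := by field_simp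
    have hlog : 0 ≤ Real.log (ε / (c * |ω * μ - 1|)) := Real.log_nonneg h1
    have hneg : Real.log lam < 0 := Real.log_neg hlam hlam1
    have : Real.log (ε / (c * |ω * μ - 1|)) / Real.log lam ≤ 0 := by
      rw [div_le_iff_of_neg hneg]; nlinarith
    exact max_eq_left this

lemma Leps_eq_log {ε c lam : ℝ} (hε : 0 < ε) (hc : 0 < c) (hlam : 0 < lam) (hlam1 : lam < 1)
    {ω μ : ℝ} (h : ε / c ≤ |ω * μ - 1|) :
    Leps ε c μ lam ω = Real.log (ε / (c * |ω * μ - 1|)) / Real.log lam := by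
  have hd : 0 < |ω * μ - 1| := lt_of_lt_of_le (div_pos hε hc) h
  have hne : ω * μ ≠ 1 := fun h' => by simp [h'] at hd
  have hq : ε / (c * |ω * μ - 1|) ≤ 1 := by
    rw [div_le_one (by positivity)]
    calc ε = c * (ε / c) := by field_simp
      _ ≤ c * |ω * μ - 1| := by nlinarith
  have hlog : Real.log (ε / (c * |ω * μ - 1|)) ≤ 0 :=
    Real.log_nonpos (by positivity) hq
  have hneg : Real.log lam < 0 := Real.log_neg hlam hlam1
  have h0 : 0 ≤ Real.log (ε / (c * |ω * μ - 1|)) / Real.log lam := by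
    rw [le_div_iff_of_neg hneg]; nlinarith
  unfold Leps
  rw [if_neg hne, max_eq_right h0]

/-- the log-form value is strictly increasing in the distance `d`. -/
lemma logform_lt {ε c lam : ℝ} (hε : 0 < ε) (hc : 0 < c) (hlam : 0 < lam) (hlam1 : lam < 1)
    {d1 d2 : ℝ} (h1 : ε / c ≤ d1) (h12 : d1 < d2) :
    Real.log (ε / (c * d1)) / Real.log lam < Real.log (ε / (c * d2)) / Real.log lam := by
  have hd1 : 0 < d1 := lt_of_lt_of_le (div_pos hε hc) h1
  have hd2 : 0 < d2 := lt_trans hd1 h12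
  have hmono : ε / (c * d2) < ε / (c * d1) :=
    div_lt_div_of_pos_left hε (by positivity) (by nlinarith)
  have hlog : Real.log (ε / (c * d2)) < Real.log (ε / (c * d1)) :=
    Real.log_lt_log (by positivity) hmono
  have hneg : Real.log lam < 0 := Real.log_neg hlam hlam1
  exact (div_lt_div_right_of_neg hneg).mpr hlog

/-- the log-form value is concave in the distance `d`. -/
lemma logform_concave {ε c lam : ℝ} (hε : 0 < ε) (hc : 0 < c) (hlam : 0 < lam) (hlam1 : lam < 1)
    {x y T : ℝ} (hx : 0 < x) (hy : 0 < y) (hT : 0 ≤ T) (hT1 : T ≤ 1) :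
    T * (Real.log (ε / (c * x)) / Real.log lam)
      + (1 - T) * (Real.log (ε / (c * y)) / Real.log lam)
      ≤ Real.log (ε / (c * (T * x + (1 - T) * y))) / Real.log lam := by
  have hcomb : 0 < T * x + (1 - T) * y := by
    rcases eq_or_lt_of_le hT with h | h
    · have : T = 0 := h.symm; rw [this]; nlinarith
    · nlinarith
  have hlogcc : T * Real.log x + (1 - T) * Real.log y ≤ Real.log (T * x + (1 - T) * y) := by
    have hb' : (0:ℝ) ≤ 1 - T := by linarith
    have := (strictConcaveOn_log_Ioi.concaveOn).2 (Set.mem_Ioi.mpr hx) (Set.mem_Ioi.mpr hy)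
      hT hb' (by ring)
    simpa [smul_eq_mul] using this
  have hne : c ≠ 0 := ne_of_gt hc
  have hexp : ∀ d : ℝ, 0 < d →
      Real.log (ε / (c * d)) = Real.log ε - Real.log c - Real.log d := by
    intro d hd
    rw [Real.log_div (ne_of_gt hε) (by positivity), Real.log_mul hne (ne_of_gt hd)]
    ring
  rw [hexp x hx, hexp y hy, hexp _ hcomb]
  have hneg : Real.log lam < 0 := Real.log_neg hlam hlam1
  have hnum : T * ((Real.log ε - Real.log c - Real.log x))
      + (1 - T) * ((Real.log ε - Real.log c - Real.log y))
      = (Real.log ε - Real.log c) - (T * Real.log x + (1 - T) * Real.log y) := by ring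
  calc T * ((Real.log ε - Real.log c - Real.log x) / Real.log lam)
      + (1 - T) * ((Real.log ε - Real.log c - Real.log y) / Real.log lam)
      = ((Real.log ε - Real.log c) - (T * Real.log x + (1 - T) * Real.log y)) / Real.log lam := by
        field_simp; ring
    _ ≤ (Real.log ε - Real.log c - Real.log (T * x + (1 - T) * y)) / Real.log lam := by
        rw [div_le_div_right_of_neg hneg]; linarith

set_option maxHeartbeats 2000000 in
/-- Location of the (unique) minimizer of `E_ε` depending on how `p` compares to
the threshold `p_ε`. -/
theorem Eeps_minimizer_cases (μ1 μ2 l1 l2 c1 c2 p : ℝ)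
    (hμ1 : 0 < μ1) (hμ12 : μ1 < μ2) (hμ2 : μ2 < 2)
    (hl1 : l1 = 1 - μ1 / 2) (hl2 : l2 = 1 - μ2 / 2)
    (hc1 : 0 < c1) (hc2 : 0 < c2) (hp0 : 0 < p) (hp1 : p < 1)
    (ε : ℝ) (hε : 0 < ε)
    (hεlt : ε < c1 * c2 * (μ2 - μ1) / (c1 * μ1 + c2 * μ2)) :
    (p > pEps ε c1 c2 μ1 μ2 l1 l2 →
      ∀ ω : ℝ, ω ≠ omegaE1 ε c1 μ1 →
        Eeps p ε c1 c2 μ1 μ2 l1 l2 ω >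
          Eeps p ε c1 c2 μ1 μ2 l1 l2 (omegaE1 ε c1 μ1)) ∧
    (p < pEps ε c1 c2 μ1 μ2 l1 l2 →
      ∀ ω : ℝ, ω ≠ omegaE2 ε c2 μ2 →
        Eeps p ε c1 c2 μ1 μ2 l1 l2 ω >
          Eeps p ε c1 c2 μ1 μ2 l1 l2 (omegaE2 ε c2 μ2)) ∧
    (p = pEps ε c1 c2 μ1 μ2 l1 l2 →
      (∀ ω : ℝ, Eeps p ε c1 c2 μ1 μ2 l1 l2 ω ≥
          Eeps p ε c1 c2 μ1 μ2 l1 l2 (omegaE1 ε c1 μ1)) ∧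
      (∀ ω : ℝ, Eeps p ε c1 c2 μ1 μ2 l1 l2 ω ≥
          Eeps p ε c1 c2 μ1 μ2 l1 l2 (omegaE2 ε c2 μ2))) := by
  have hμ2pos : 0 < μ2 := lt_trans hμ1 hμ12
  have hμ1lt : μ1 < 2 := lt_trans hμ12 hμ2
  have hl1pos : 0 < l1 := by rw [hl1]; linarith
  have hl1lt : l1 < 1 := by rw [hl1]; linarith
  have hl2pos : 0 < l2 := by rw [hl2]; linarith
  have hl2lt : l2 < 1 := by rw [hl2]; linarith
  set w1 : ℝ := omegaE1 ε c1 μ1 with hw1def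
  set w2 : ℝ := omegaE2 ε c2 μ2 with hw2def
  have hw1μ : w1 * μ1 = 1 - ε / c1 := by
    rw [hw1def]; unfold omegaE1; field_simp
  have hw2μ : w2 * μ2 = 1 + ε / c2 := by
    rw [hw2def]; unfold omegaE2; field_simp
  have hkey : ε * (c1 * μ1 + c2 * μ2) < c1 * c2 * (μ2 - μ1) :=
    (lt_div_iff₀ (by positivity)).1 hεlt
  have hw21 : w2 < w1 := by
    rw [hw1def, hw2def]; unfold omegaE1 omegaE2
    rw [div_add_div _ _ (ne_of_gt hμ2pos) (by positivity),
        div_sub_div _ _ (ne_of_gt hμ1) (by positivity)]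
    rw [div_lt_div_iff₀ (by positivity) (by positivity)]
    nlinarith [mul_lt_mul_of_pos_left hkey (mul_pos hμ1 hμ2pos)]
  -- absolute value facts
  have habs1 : ∀ ω : ℝ, ω ≤ w1 → |ω * μ1 - 1| = 1 - ω * μ1 := by
    intro ω h
    have h' : ω * μ1 ≤ w1 * μ1 := mul_le_mul_of_nonneg_right h hμ1.le
    rw [abs_of_nonpos (by linarith [div_pos hε hc1, hw1μ])]; ring
  have habs2 : ∀ ω : ℝ, w2 ≤ ω → |ω * μ2 - 1| = ω * μ2 - 1 := by
    intro ω h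
    have h' : w2 * μ2 ≤ ω * μ2 := mul_le_mul_of_nonneg_right h hμ2pos.le
    rw [abs_of_nonneg (by linarith [div_pos hε hc2, hw2μ])]
  have hd1le : ∀ ω : ℝ, ω ≤ w1 → ε / c1 ≤ 1 - ω * μ1 := by
    intro ω h
    have h' : ω * μ1 ≤ w1 * μ1 := mul_le_mul_of_nonneg_right h hμ1.le
    linarith [hw1μ]
  have hd2le : ∀ ω : ℝ, w2 ≤ ω → ε / c2 ≤ ω * μ2 - 1 := by
    intro ω h
    have h' : w2 * μ2 ≤ ω * μ2 := mul_le_mul_of_nonneg_right h hμ2pos.le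
    linarith [hw2μ]
  -- values at the two endpoints
  set a : ℝ := Leps ε c1 μ1 l1 w2 with hadef
  set b : ℝ := Leps ε c2 μ2 l2 w1 with hbdef
  have hL1w1 : Leps ε c1 μ1 l1 w1 = 0 := by
    apply Leps_eq_zero hε hc1 hl1pos hl1lt
    rw [habs1 w1 le_rfl]
    linarith [hd1le w1 le_rfl]
  have hL2w2 : Leps ε c2 μ2 l2 w2 = 0 := by
    apply Leps_eq_zero hε hc2 hl2pos hl2lt
    rw [habs2 w2 le_rfl]
    linarith [hd2le w2 le_rfl]
  have hEw1 : Eeps p ε c1 c2 μ1 μ2 l1 l2 w1 = (1 - p) * b := by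
    unfold Eeps; rw [hL1w1, ← hbdef]; ring
  have hEw2 : Eeps p ε c1 c2 μ1 μ2 l1 l2 w2 = p * a := by
    unfold Eeps; rw [hL2w2, ← hadef]; ring
  have hlogform0 : ∀ c : ℝ, 0 < c → Real.log (ε / (c * (ε / c))) = 0 := by
    intro c hc
    have : ε / (c * (ε / c)) = 1 := by field_simp
    rw [this, Real.log_one]
  -- strict distances at the opposite endpoints
  have hd1w2 : ε / c1 < 1 - w2 * μ1 := by
    have h1 : w2 * μ1 < w1 * μ1 := mul_lt_mul_of_pos_right hw21 hμ1
    linarith [hw1μ]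
  have hd2w1 : ε / c2 < w1 * μ2 - 1 := by
    have h1 : w2 * μ2 < w1 * μ2 := mul_lt_mul_of_pos_right hw21 hμ2pos
    linarith [hw2μ]
  have ha_log : a = Real.log (ε / (c1 * (1 - w2 * μ1))) / Real.log l1 := by
    rw [hadef, Leps_eq_log hε hc1 hl1pos hl1lt (by rw [habs1 w2 (le_of_lt hw21)]; linarith),
        habs1 w2 (le_of_lt hw21)]
  have hb_log : b = Real.log (ε / (c2 * (w1 * μ2 - 1))) / Real.log l2 := by
    rw [hbdef, Leps_eq_log hε hc2 hl2pos hl2lt (by rw [habs2 w1 (le_of_lt hw21)]; linarith),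
        habs2 w1 (le_of_lt hw21)]
  have hapos : 0 < a := by
    rw [ha_log]
    have := logform_lt hε hc1 hl1pos hl1lt (le_refl (ε / c1)) hd1w2
    rw [hlogform0 c1 hc1] at this
    simpa using this
  have hbpos : 0 < b := by
    rw [hb_log]
    have := logform_lt hε hc2 hl2pos hl2lt (le_refl (ε / c2)) hd2w1
    rw [hlogform0 c2 hc2] at this
    simpa using this
  have hpe : pEps ε c1 c2 μ1 μ2 l1 l2 = b / (a + b) := rfl
  -- monotone estimates outside [w2, w1]
  have hS1 : ∀ ω : ℝ, w1 < ω → (1 - p) * b < Eeps p ε c1 c2 μ1 μ2 l1 l2 ω := by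
    intro ω h
    have hw2ω : w2 < ω := lt_trans hw21 h
    have habs : |ω * μ2 - 1| = ω * μ2 - 1 := habs2 ω (le_of_lt hw2ω)
    have hdlt : w1 * μ2 - 1 < ω * μ2 - 1 := by
      have := mul_lt_mul_of_pos_right h hμ2pos; linarith
    have hL2 : Leps ε c2 μ2 l2 ω = Real.log (ε / (c2 * (ω * μ2 - 1))) / Real.log l2 := by
      rw [Leps_eq_log hε hc2 hl2pos hl2lt (by rw [habs]; linarith), habs]
    have hlt : b < Leps ε c2 μ2 l2 ω := by
      rw [hb_log, hL2]
      exact logform_lt hε hc2 hl2pos hl2lt (le_of_lt hd2w1) hdlt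
    have hL1n : 0 ≤ p * Leps ε c1 μ1 l1 ω := mul_nonneg hp0.le (Leps_nonneg ε c1 μ1 l1 ω)
    have h1 : (1 - p) * b < (1 - p) * Leps ε c2 μ2 l2 ω :=
      mul_lt_mul_of_pos_left hlt (by linarith)
    unfold Eeps
    linarith
  have hS2 : ∀ ω : ℝ, ω < w2 → p * a < Eeps p ε c1 c2 μ1 μ2 l1 l2 ω := by
    intro ω h
    have hωw1 : ω < w1 := lt_trans h hw21
    have habs : |ω * μ1 - 1| = 1 - ω * μ1 := habs1 ω (le_of_lt hωw1)
    have hdlt : 1 - w2 * μ1 < 1 - ω * μ1 := by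
      have := mul_lt_mul_of_pos_right h hμ1; linarith
    have hL1 : Leps ε c1 μ1 l1 ω = Real.log (ε / (c1 * (1 - ω * μ1))) / Real.log l1 := by
      rw [Leps_eq_log hε hc1 hl1pos hl1lt (by rw [habs]; linarith [hd1le ω (le_of_lt hωw1)]),
          habs]
    have hlt : a < Leps ε c1 μ1 l1 ω := by
      rw [ha_log, hL1]
      exact logform_lt hε hc1 hl1pos hl1lt (le_of_lt hd1w2) hdlt
    have hL2n : 0 ≤ (1 - p) * Leps ε c2 μ2 l2 ω :=
      mul_nonneg (by linarith) (Leps_nonneg ε c2 μ2 l2 ω)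
    have h1 : p * a < p * Leps ε c1 μ1 l1 ω := mul_lt_mul_of_pos_left hlt hp0
    unfold Eeps
    linarith
  -- concavity estimate on [w2, w1]
  have hmid : ∀ ω : ℝ, w2 ≤ ω → ω ≤ w1 →
      ((w1 - ω) / (w1 - w2)) * (p * a) + ((ω - w2) / (w1 - w2)) * ((1 - p) * b)
        ≤ Eeps p ε c1 c2 μ1 μ2 l1 l2 ω := by
    intro ω h2 h1
    have hne : w1 - w2 ≠ 0 := ne_of_gt (by linarith)
    set T : ℝ := (w1 - ω) / (w1 - w2) with hTdef
    have hT0 : 0 ≤ T := div_nonneg (by linarith) (by linarith)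
    have hT1 : T ≤ 1 := (div_le_one (by linarith)).2 (by linarith)
    have hSval : (ω - w2) / (w1 - w2) = 1 - T := by
      rw [hTdef]; field_simp; ring
    have hx1 : (0:ℝ) < 1 - w2 * μ1 := lt_trans (div_pos hε hc1) hd1w2
    have hy1 : (0:ℝ) < 1 - w1 * μ1 := by rw [hw1μ]; simp [div_pos hε hc1]
    have hx2 : (0:ℝ) < w2 * μ2 - 1 := by rw [hw2μ]; simp [div_pos hε hc2]
    have hy2 : (0:ℝ) < w1 * μ2 - 1 := lt_trans (div_pos hε hc2) hd2w1
    have hcomb1 : T * (1 - w2 * μ1) + (1 - T) * (1 - w1 * μ1) = 1 - ω * μ1 := by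
      rw [hTdef]; field_simp; ring
    have hcomb2 : T * (w2 * μ2 - 1) + (1 - T) * (w1 * μ2 - 1) = ω * μ2 - 1 := by
      rw [hTdef]; field_simp; ring
    have hcc1 := logform_concave hε hc1 hl1pos hl1lt hx1 hy1 hT0 hT1
    have hcc2 := logform_concave hε hc2 hl2pos hl2lt hx2 hy2 hT0 hT1
    rw [hcomb1] at hcc1
    rw [hcomb2] at hcc2
    -- the value at w1 for task 1 is zero; similarly at w2 for task 2
    have hzero1 : Real.log (ε / (c1 * (1 - w1 * μ1))) / Real.log l1 = 0 := by
      have : 1 - w1 * μ1 = ε / c1 := by rw [hw1μ]; ring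
      rw [this, hlogform0 c1 hc1, zero_div]
    have hzero2 : Real.log (ε / (c2 * (w2 * μ2 - 1))) / Real.log l2 = 0 := by
      have : w2 * μ2 - 1 = ε / c2 := by rw [hw2μ]; ring
      rw [this, hlogform0 c2 hc2, zero_div]
    rw [hzero1] at hcc1
    rw [hzero2] at hcc2
    have hL1ω : Leps ε c1 μ1 l1 ω = Real.log (ε / (c1 * (1 - ω * μ1))) / Real.log l1 := by
      rw [Leps_eq_log hε hc1 hl1pos hl1lt (by rw [habs1 ω h1]; exact hd1le ω h1), habs1 ω h1]
    have hL2ω : Leps ε c2 μ2 l2 ω = Real.log (ε / (c2 * (ω * μ2 - 1))) / Real.log l2 := by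
      rw [Leps_eq_log hε hc2 hl2pos hl2lt (by rw [habs2 ω h2]; exact hd2le ω h2), habs2 ω h2]
    have hineq1 : T * a ≤ Leps ε c1 μ1 l1 ω := by
      rw [hL1ω, ha_log]; linarith [hcc1]
    have hineq2 : (1 - T) * b ≤ Leps ε c2 μ2 l2 ω := by
      rw [hL2ω, hb_log]; linarith [hcc2]
    rw [hSval]
    unfold Eeps
    have h1 := mul_le_mul_of_nonneg_left hineq1 (le_of_lt hp0)
    have h2 := mul_le_mul_of_nonneg_left hineq2 (by linarith : (0:ℝ) ≤ 1 - p)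
    linarith
  have habpos : 0 < a + b := by linarith
  refine ⟨?_, ?_, ?_⟩
  · -- p > p_ε : unique minimizer at w1
    intro hgt ω hne
    rw [hpe] at hgt
    have hkey1 : (1 - p) * b < p * a := by
      have := (div_lt_iff₀ habpos).1 hgt
      linarith
    rw [hEw1]
    rcases lt_trichotomy ω w1 with hlt | heq | hgt2
    · rcases lt_or_ge ω w2 with hlt2 | hge2
      · exact lt_trans hkey1 (hS2 ω hlt2)
      · have h := hmid ω hge2 (le_of_lt hlt)
        have hTpos : 0 < (w1 - ω) / (w1 - w2) := div_pos (by linarith) (by linarith)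
        have hSval : (ω - w2) / (w1 - w2) = 1 - (w1 - ω) / (w1 - w2) := by
          have hne' : w1 - w2 ≠ 0 := ne_of_gt (by linarith)
          field_simp
          try ring
        rw [hSval] at h
        have h1 := mul_lt_mul_of_pos_left hkey1 hTpos
        linarith
    · exact absurd heq hne
    · exact hS1 ω hgt2
  · -- p < p_ε : unique minimizer at w2
    intro hlt ω hne
    rw [hpe] at hlt
    have hkey1 : p * a < (1 - p) * b := by
      have := (lt_div_iff₀ habpos).1 hlt
      linarith
    rw [hEw2]
    rcases lt_trichotomy ω w2 with hlt2 | heq | hgt2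
    · exact hS2 ω hlt2
    · exact absurd heq hne
    · rcases lt_or_ge w1 ω with hgt1 | hle1
      · exact lt_trans hkey1 (hS1 ω hgt1)
      · have h := hmid ω (le_of_lt hgt2) hle1
        have hSpos : 0 < (ω - w2) / (w1 - w2) := div_pos (by linarith) (by linarith)
        have hTval : (w1 - ω) / (w1 - w2) = 1 - (ω - w2) / (w1 - w2) := by
          have hne' : w1 - w2 ≠ 0 := ne_of_gt (by linarith)
          field_simp
          try ring
        rw [hTval] at h
        have h1 := mul_lt_mul_of_pos_left hkey1 hSpos
        linarith
  · -- p = p_ε : both are minimizers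
    intro heqp
    rw [hpe] at heqp
    have hkey1 : p * a = (1 - p) * b := by
      rw [eq_div_iff (ne_of_gt habpos)] at heqp
      linarith [heqp]
    have hboth : ∀ ω : ℝ, (1 - p) * b ≤ Eeps p ε c1 c2 μ1 μ2 l1 l2 ω := by
      intro ω
      rcases lt_or_ge ω w2 with hlt2 | hge2
      · linarith [hS2 ω hlt2]
      · rcases lt_or_ge w1 ω with hgt1 | hle1
        · linarith [hS1 ω hgt1]
        · have h := hmid ω hge2 hle1
          have hSval : (ω - w2) / (w1 - w2) = 1 - (w1 - ω) / (w1 - w2) := by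
            have hne : w1 - w2 ≠ 0 := ne_of_gt (by linarith)
            field_simp
            ring
          rw [hSval] at h
          have h1 : (w1 - ω) / (w1 - w2) * (p * a)
              = (w1 - ω) / (w1 - w2) * ((1 - p) * b) := by rw [hkey1]
          linarith
    constructor
    · intro ω; rw [hEw1]; exact hboth ω
    · intro ω; rw [hEw2, hkey1]; exact hboth ω
end

section
/- The threshold probabilities converge to p_0 as the tolerance vanishes: lim_{ε→0⁺} p_ε = p_0 = log λ1 / (log λ1 + log λ2). -/
open Filter Set

/-- The threshold probabilities converge to `p_0 = log λ1 / (log λ1 + log λ2)`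
as the tolerance vanishes. -/
theorem pEps_tendsto_pZero (μ1 μ2 l1 l2 c1 c2 p : ℝ)
    (hμ1 : 0 < μ1) (hμ12 : μ1 < μ2) (hμ2 : μ2 < 2)
    (hl1 : l1 = 1 - μ1 / 2) (hl2 : l2 = 1 - μ2 / 2)
    (hc1 : 0 < c1) (hc2 : 0 < c2) (hp0 : 0 < p) (hp1 : p < 1) :
    Filter.Tendsto (fun ε : ℝ => pEps ε c1 c2 μ1 μ2 l1 l2)
      (nhdsWithin 0 (Set.Ioi 0))
      (nhds (Real.log l1 / (Real.log l1 + Real.log l2))) ∧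
    pZero l1 l2 = Real.log l1 / (Real.log l1 + Real.log l2) := by
  refine ⟨?_, rfl⟩
  have hμ2pos : 0 < μ2 := hμ1.trans hμ12
  have hl1pos : 0 < l1 := by rw [hl1]; linarith
  have hl1lt : l1 < 1 := by rw [hl1]; linarith
  have hl2pos : 0 < l2 := by rw [hl2]; linarith
  have hl2lt : l2 < 1 := by rw [hl2]; linarith
  have hL1 : Real.log l1 < 0 := Real.log_neg hl1pos hl1lt
  have hL2 : Real.log l2 < 0 := Real.log_neg hl2pos hl2lt
  set u : ℝ → ℝ := fun ε => Real.log (c1 * |omegaE2 ε c2 μ2 * μ1 - 1|) with hu_def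
  set v : ℝ → ℝ := fun ε => Real.log (c2 * |omegaE1 ε c1 μ1 * μ2 - 1|) with hv_def
  have hg1 : Continuous (fun ε : ℝ => omegaE2 ε c2 μ2 * μ1 - 1) := by
    unfold omegaE2; fun_prop
  have hg2 : Continuous (fun ε : ℝ => omegaE1 ε c1 μ1 * μ2 - 1) := by
    unfold omegaE1; fun_prop
  have h10 : omegaE2 0 c2 μ2 * μ1 - 1 < 0 := by
    have h : omegaE2 0 c2 μ2 = 1 / μ2 := by simp [omegaE2]
    rw [h, one_div_mul_eq_div]
    have := (div_lt_one hμ2pos).mpr hμ12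
    linarith
  have h20 : 0 < omegaE1 0 c1 μ1 * μ2 - 1 := by
    have h : omegaE1 0 c1 μ1 = 1 / μ1 := by simp [omegaE1]
    rw [h, one_div_mul_eq_div]
    have := (one_lt_div hμ1).mpr hμ12
    linarith
  have ha1 : 0 < c1 * |omegaE2 0 c2 μ2 * μ1 - 1| := mul_pos hc1 (abs_pos.mpr h10.ne)
  have ha2 : 0 < c2 * |omegaE1 0 c1 μ1 * μ2 - 1| := mul_pos hc2 (abs_pos.mpr h20.ne')
  have hcu : Continuous (fun ε : ℝ => c1 * |omegaE2 ε c2 μ2 * μ1 - 1|) :=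
    continuous_const.mul hg1.abs
  have hcv : Continuous (fun ε : ℝ => c2 * |omegaE1 ε c1 μ1 * μ2 - 1|) :=
    continuous_const.mul hg2.abs
  have hu0 : Filter.Tendsto u (nhdsWithin 0 (Set.Ioi 0)) (nhds (u 0)) :=
    (((hcu.tendsto 0).log ha1.ne')).mono_left nhdsWithin_le_nhds
  have hv0 : Filter.Tendsto v (nhdsWithin 0 (Set.Ioi 0)) (nhds (v 0)) :=
    (((hcv.tendsto 0).log ha2.ne')).mono_left nhdsWithin_le_nhds
  have hlogbot : Filter.Tendsto Real.log (nhdsWithin 0 (Set.Ioi 0)) atBot :=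
    Real.tendsto_log_nhdsGT_zero
  have hinv : Filter.Tendsto (fun ε : ℝ => (Real.log ε)⁻¹)
      (nhdsWithin 0 (Set.Ioi 0)) (nhds 0) := by
    have h1 : Filter.Tendsto (fun ε : ℝ => -Real.log ε) (nhdsWithin 0 (Set.Ioi 0)) atTop :=
      tendsto_neg_atTop_iff.mpr hlogbot
    have h2 := h1.inv_tendsto_atTop
    have h3 := h2.neg
    simpa [inv_neg] using h3
  have hU : Filter.Tendsto (fun ε : ℝ => u ε * (Real.log ε)⁻¹)
      (nhdsWithin 0 (Set.Ioi 0)) (nhds 0) := by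
    simpa using hu0.mul hinv
  have hV : Filter.Tendsto (fun ε : ℝ => v ε * (Real.log ε)⁻¹)
      (nhdsWithin 0 (Set.Ioi 0)) (nhds 0) := by
    simpa using hv0.mul hinv
  have hnum : Filter.Tendsto (fun ε : ℝ => Real.log l1 * (1 - v ε * (Real.log ε)⁻¹))
      (nhdsWithin 0 (Set.Ioi 0)) (nhds (Real.log l1)) := by
    simpa using (hV.const_sub 1).const_mul (Real.log l1)
  have hden : Filter.Tendsto (fun ε : ℝ =>
      Real.log l2 * (1 - u ε * (Real.log ε)⁻¹) + Real.log l1 * (1 - v ε * (Real.log ε)⁻¹))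
      (nhdsWithin 0 (Set.Ioi 0)) (nhds (Real.log l2 + Real.log l1)) := by
    have h2 : Filter.Tendsto (fun ε : ℝ => Real.log l2 * (1 - u ε * (Real.log ε)⁻¹))
        (nhdsWithin 0 (Set.Ioi 0)) (nhds (Real.log l2)) := by
      simpa using (hU.const_sub 1).const_mul (Real.log l2)
    exact h2.add hnum
  have hsumne : Real.log l2 + Real.log l1 ≠ 0 := by linarith
  have hG : Filter.Tendsto (fun ε : ℝ =>
      (Real.log l1 * (1 - v ε * (Real.log ε)⁻¹)) /
      (Real.log l2 * (1 - u ε * (Real.log ε)⁻¹) + Real.log l1 * (1 - v ε * (Real.log ε)⁻¹)))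
      (nhdsWithin 0 (Set.Ioi 0)) (nhds (Real.log l1 / (Real.log l2 + Real.log l1))) :=
    hnum.div hden hsumne
  have hgoal : Real.log l1 / (Real.log l1 + Real.log l2)
      = Real.log l1 / (Real.log l2 + Real.log l1) := by rw [add_comm]
  rw [hgoal]
  refine hG.congr' ?_ |>.mono_right le_rfl
  -- eventual equality
  have hid : Filter.Tendsto (fun ε : ℝ => ε) (nhdsWithin 0 (Set.Ioi 0)) (nhds 0) :=
    tendsto_id.mono_left nhdsWithin_le_nhds
  have e0 : ∀ᶠ ε : ℝ in nhdsWithin 0 (Set.Ioi 0), 0 < ε :=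
    eventually_mem_nhdsWithin
  have e5 : ∀ᶠ ε : ℝ in nhdsWithin 0 (Set.Ioi 0), ε < 1 :=
    hid.eventually (eventually_lt_nhds (by norm_num))
  have e1 : ∀ᶠ ε : ℝ in nhdsWithin 0 (Set.Ioi 0), 0 < omegaE1 ε c1 μ1 * μ2 - 1 :=
    (hg2.continuousAt.tendsto.mono_left nhdsWithin_le_nhds).eventually
      (eventually_gt_nhds h20)
  have e2 : ∀ᶠ ε : ℝ in nhdsWithin 0 (Set.Ioi 0), omegaE2 ε c2 μ2 * μ1 - 1 < 0 :=
    (hg1.continuousAt.tendsto.mono_left nhdsWithin_le_nhds).eventually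
      (eventually_lt_nhds h10)
  have e3 : ∀ᶠ ε : ℝ in nhdsWithin 0 (Set.Ioi 0), ε < c2 * |omegaE1 ε c1 μ1 * μ2 - 1| := by
    have h := ((hcv.sub continuous_id).continuousAt (x := (0:ℝ))).tendsto.mono_left
      (nhdsWithin_le_nhds (s := Set.Ioi (0:ℝ)))
    have h' := h.eventually (eventually_gt_nhds (by simpa using ha2))
    filter_upwards [h'] with ε hε
    simpa [sub_pos] using hε
  have e4 : ∀ᶠ ε : ℝ in nhdsWithin 0 (Set.Ioi 0), ε < c1 * |omegaE2 ε c2 μ2 * μ1 - 1| := by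
    have h := ((hcu.sub continuous_id).continuousAt (x := (0:ℝ))).tendsto.mono_left
      (nhdsWithin_le_nhds (s := Set.Ioi (0:ℝ)))
    have h' := h.eventually (eventually_gt_nhds (by simpa using ha1))
    filter_upwards [h'] with ε hε
    simpa [sub_pos] using hε
  filter_upwards [e0, e1, e2, e3, e4, e5] with ε h0 h1 h2 h3 h4 h5
  have hx : Real.log ε < 0 := Real.log_neg h0 h5
  have hxne : Real.log ε ≠ 0 := hx.ne
  have hB2 : 0 < c2 * |omegaE1 ε c1 μ1 * μ2 - 1| := h0.trans h3
  have hB1 : 0 < c1 * |omegaE2 ε c2 μ2 * μ1 - 1| := h0.trans h4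
  have hL2eq : Leps ε c2 μ2 l2 (omegaE1 ε c1 μ1) = (Real.log ε - v ε) / Real.log l2 := by
    rw [Leps, if_neg (sub_ne_zero.mp h1.ne')]
    have hdiv : Real.log (ε / (c2 * |omegaE1 ε c1 μ1 * μ2 - 1|)) < 0 :=
      Real.log_neg (div_pos h0 hB2) ((div_lt_one hB2).mpr h3)
    rw [max_eq_right (div_nonneg_of_nonpos hdiv.le hL2.le),
      Real.log_div h0.ne' hB2.ne']
  have hL1eq : Leps ε c1 μ1 l1 (omegaE2 ε c2 μ2) = (Real.log ε - u ε) / Real.log l1 := by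
    rw [Leps, if_neg (sub_ne_zero.mp h2.ne)]
    have hdiv : Real.log (ε / (c1 * |omegaE2 ε c2 μ2 * μ1 - 1|)) < 0 :=
      Real.log_neg (div_pos h0 hB1) ((div_lt_one hB1).mpr h4)
    rw [max_eq_right (div_nonneg_of_nonpos hdiv.le hL1.le),
      Real.log_div h0.ne' hB1.ne']
  have hxu : Real.log ε - u ε < 0 := by
    have := Real.log_lt_log h0 h4
    rw [hu_def]; simpa [sub_neg] using this
  have hxv : Real.log ε - v ε < 0 := by
    have := Real.log_lt_log h0 h3
    rw [hv_def]; simpa [sub_neg] using this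
  have hDpos : 0 < (Real.log ε - u ε) / Real.log l1 + (Real.log ε - v ε) / Real.log l2 :=
    add_pos (div_pos_of_neg_of_neg hxu hL1) (div_pos_of_neg_of_neg hxv hL2)
  have ht1 : 0 < 1 - u ε * (Real.log ε)⁻¹ := by
    have h := div_pos_of_neg_of_neg hxu hx
    rw [sub_div, div_self hxne, div_eq_mul_inv] at h
    exact h
  have ht2 : 0 < 1 - v ε * (Real.log ε)⁻¹ := by
    have h := div_pos_of_neg_of_neg hxv hx
    rw [sub_div, div_self hxne, div_eq_mul_inv] at h
    exact h
  have hGDne : Real.log l2 * (1 - u ε * (Real.log ε)⁻¹)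
      + Real.log l1 * (1 - v ε * (Real.log ε)⁻¹) ≠ 0 := by
    have a1 := mul_neg_of_neg_of_pos hL2 ht1
    have a2 := mul_neg_of_neg_of_pos hL1 ht2
    linarith
  show _ = pEps ε c1 c2 μ1 μ2 l1 l2
  unfold pEps
  rw [hL1eq, hL2eq]
  rw [div_eq_div_iff hGDne hDpos.ne']
  field_simp [hxne, hL1.ne, hL2.ne]
end

section
/- If p > p_0, then there exists ε0 with 0 < ε0 < c1·c2·(μ2 − μ1)/(c1·μ1 + c2·μ2) such that for every ε ∈ (0, ε0) the unique minimizer of E_ε over ℝ is ω_(ε,1); consequently these minimizers converge to 1/μ1 as ε → 0⁺. If p < p_0, then there exists ε0 > 0 such that for every ε ∈ (0, ε0) the unique minimizer of E_ε over ℝ is ω_(ε,2); consequently these minimizers converge to 1/μ2 as ε → 0⁺. -/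
lemma Leps_ge (ε c μ lam ω : ℝ) (h : ω * μ ≠ 1) :
    Real.log (ε / (c * |ω * μ - 1|)) / Real.log lam ≤ Leps ε c μ lam ω := by
  unfold Leps; rw [if_neg h]; exact le_max_right _ _

lemma Leps_eq {ε c lam : ℝ} (μ ω : ℝ) (hε : 0 < ε) (hc : 0 < c) (hlam : Real.log lam < 0)
    (h : ε ≤ c * |ω * μ - 1|) :
    Leps ε c μ lam ω = Real.log (ε / (c * |ω * μ - 1|)) / Real.log lam := by
  have hz : 0 < |ω * μ - 1| := by
    by_contra hz
    push_neg at hz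
    have : |ω * μ - 1| = 0 := le_antisymm hz (abs_nonneg _)
    rw [this, mul_zero] at h; linarith
  have hne : ω * μ ≠ 1 := by
    intro he; rw [he] at hz; simp at hz
  have hpos : 0 < c * |ω * μ - 1| := mul_pos hc hz
  have h1 : ε / (c * |ω * μ - 1|) ≤ 1 := (div_le_one hpos).2 h
  have hlog : Real.log (ε / (c * |ω * μ - 1|)) ≤ 0 :=
    Real.log_nonpos (by positivity) h1
  have : 0 ≤ Real.log (ε / (c * |ω * μ - 1|)) / Real.log lam :=
    div_nonneg_of_nonpos hlog hlam.le
  unfold Leps; rw [if_neg hne, max_eq_right this]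

lemma expr_mono {ε c lam z1 z2 : ℝ} (hε : 0 < ε) (hc : 0 < c) (hlam : Real.log lam < 0)
    (h1 : 0 < z1) (h12 : z1 < z2) :
    Real.log (ε / (c * z1)) / Real.log lam < Real.log (ε / (c * z2)) / Real.log lam := by
  have h2 : 0 < z2 := h1.trans h12
  have : Real.log (ε / (c * z2)) < Real.log (ε / (c * z1)) := by
    apply Real.log_lt_log (by positivity)
    apply div_lt_div_of_pos_left hε (by positivity)
    exact mul_lt_mul_of_pos_left h12 hc
  exact div_lt_div_of_neg_of_lt hlam this

lemma expr_mono_le {ε c lam z1 z2 : ℝ} (hε : 0 < ε) (hc : 0 < c) (hlam : Real.log lam < 0)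
    (h1 : 0 < z1) (h12 : z1 ≤ z2) :
    Real.log (ε / (c * z1)) / Real.log lam ≤ Real.log (ε / (c * z2)) / Real.log lam := by
  rcases eq_or_lt_of_le h12 with h | h
  · rw [h]
  · exact (expr_mono hε hc hlam h1 h).le

lemma log_div_expand {ε c z : ℝ} (hε : 0 < ε) (hc : 0 < c) (hz : 0 < z) :
    Real.log (ε / (c * z)) = Real.log ε - Real.log c - Real.log z := by
  rw [Real.log_div hε.ne' (by positivity), Real.log_mul hc.ne' hz.ne']; ring

lemma expr_concave {ε c lam : ℝ} (hε : 0 < ε) (hc : 0 < c) (hlam : Real.log lam < 0)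
    {x x' t : ℝ} (hx : 0 < x) (hx' : 0 < x') (ht0 : 0 ≤ t) (ht1 : t ≤ 1) :
    (1 - t) * (Real.log (ε / (c * x)) / Real.log lam)
      + t * (Real.log (ε / (c * x')) / Real.log lam)
    ≤ Real.log (ε / (c * ((1 - t) * x + t * x'))) / Real.log lam := by
  set v : ℝ := (1 - t) * x + t * x' with hv_def
  have hv : 0 < v := by
    rcases lt_or_ge t 1 with h | h
    · have h1 : 0 < (1 - t) * x := mul_pos (by linarith) hx
      have h2 : 0 ≤ t * x' := mul_nonneg ht0 hx'.le
      unfold v; linarith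
    · have ht : t = 1 := le_antisymm ht1 h
      unfold v; rw [ht]; simpa using hx'
  have hconc : (1 - t) * Real.log x + t * Real.log x' ≤ Real.log v := by
    have := strictConcaveOn_log_Ioi.concaveOn.2 (Set.mem_Ioi.2 hx) (Set.mem_Ioi.2 hx')
      (by linarith : (0:ℝ) ≤ 1 - t) ht0 (by ring)
    simpa [smul_eq_mul] using this
  have e1 := log_div_expand hε hc hx
  have e2 := log_div_expand hε hc hx'
  have e3 := log_div_expand hε hc hv
  rw [e1, e2, e3]
  have hle : Real.log ε - Real.log c - Real.log v ≤
      (1 - t) * (Real.log ε - Real.log c - Real.log x)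
        + t * (Real.log ε - Real.log c - Real.log x') := by nlinarith [hconc]
  calc (1 - t) * ((Real.log ε - Real.log c - Real.log x) / Real.log lam)
        + t * ((Real.log ε - Real.log c - Real.log x') / Real.log lam)
      = ((1 - t) * (Real.log ε - Real.log c - Real.log x)
          + t * (Real.log ε - Real.log c - Real.log x')) / Real.log lam := by ring
    _ ≤ (Real.log ε - Real.log c - Real.log v) / Real.log lam :=
        div_le_div_of_nonpos_of_le hlam.le hle

set_option maxHeartbeats 1000000 in
lemma minimizer_core (μ1 μ2 l1 l2 c1 c2 p ε : ℝ)
    (hμ1 : 0 < μ1) (hμ12 : μ1 < μ2)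
    (hL1 : Real.log l1 < 0) (hL2 : Real.log l2 < 0)
    (hc1 : 0 < c1) (hc2 : 0 < c2) (hp0 : 0 < p) (hp1 : p < 1)
    (hε : 0 < ε) (hord : omegaE2 ε c2 μ2 < omegaE1 ε c1 μ1) :
    ((1 - p) * Leps ε c2 μ2 l2 (omegaE1 ε c1 μ1)
        < p * Leps ε c1 μ1 l1 (omegaE2 ε c2 μ2) →
      ∀ ω : ℝ, ω ≠ omegaE1 ε c1 μ1 →
        Eeps p ε c1 c2 μ1 μ2 l1 l2 ω > Eeps p ε c1 c2 μ1 μ2 l1 l2 (omegaE1 ε c1 μ1)) ∧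
    (p * Leps ε c1 μ1 l1 (omegaE2 ε c2 μ2)
        < (1 - p) * Leps ε c2 μ2 l2 (omegaE1 ε c1 μ1) →
      ∀ ω : ℝ, ω ≠ omegaE2 ε c2 μ2 →
        Eeps p ε c1 c2 μ1 μ2 l1 l2 ω > Eeps p ε c1 c2 μ1 μ2 l1 l2 (omegaE2 ε c2 μ2)) := by
  have hμ2 : 0 < μ2 := hμ1.trans hμ12
  set ω1 : ℝ := omegaE1 ε c1 μ1 with hω1_def
  set ω2 : ℝ := omegaE2 ε c2 μ2 with hω2_def
  have hω1μ1 : ω1 * μ1 = 1 - ε / c1 := by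
    unfold ω1; unfold omegaE1; field_simp
  have hω2μ2 : ω2 * μ2 = 1 + ε / c2 := by
    unfold ω2; unfold omegaE2; field_simp
  have hεc1 : 0 < ε / c1 := div_pos hε hc1
  have hεc2 : 0 < ε / c2 := div_pos hε hc2
  -- L1 at ω1 is 0
  have hL1ω1 : Leps ε c1 μ1 l1 ω1 = 0 := by
    have hne : ω1 * μ1 ≠ 1 := by rw [hω1μ1]; intro h; linarith
    have habs : |ω1 * μ1 - 1| = ε / c1 := by
      rw [hω1μ1, show 1 - ε / c1 - 1 = -(ε / c1) by ring, abs_neg, abs_of_pos hεc1]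
    unfold Leps
    rw [if_neg hne, habs, show c1 * (ε / c1) = ε by field_simp, div_self hε.ne',
      Real.log_one, zero_div, max_self]
  -- L2 at ω2 is 0
  have hL2ω2 : Leps ε c2 μ2 l2 ω2 = 0 := by
    have hne : ω2 * μ2 ≠ 1 := by rw [hω2μ2]; intro h; linarith
    have habs : |ω2 * μ2 - 1| = ε / c2 := by
      rw [hω2μ2, show 1 + ε / c2 - 1 = ε / c2 by ring, abs_of_pos hεc2]
    unfold Leps
    rw [if_neg hne, habs, show c2 * (ε / c2) = ε by field_simp, div_self hε.ne',
      Real.log_one, zero_div, max_self]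
  -- key quantities
  set y1 : ℝ := ω1 * μ2 - 1 with hy1_def
  set x2 : ℝ := 1 - ω2 * μ1 with hx2_def
  have hy1 : ε / c2 < y1 := by
    have : ω2 * μ2 < ω1 * μ2 := mul_lt_mul_of_pos_right hord hμ2
    unfold y1; rw [hω2μ2] at this; linarith
  have hx2 : ε / c1 < x2 := by
    have : ω2 * μ1 < ω1 * μ1 := mul_lt_mul_of_pos_right hord hμ1
    unfold x2; rw [hω1μ1] at this; linarith
  have hy1pos : 0 < y1 := hεc2.trans hy1
  have hx2pos : 0 < x2 := hεc1.trans hx2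
  -- L2 at ω1
  have habs21 : |ω1 * μ2 - 1| = y1 := abs_of_pos hy1pos
  have habs12 : |ω2 * μ1 - 1| = x2 := by
    rw [show ω2 * μ1 - 1 = -x2 by unfold x2; ring, abs_neg, abs_of_pos hx2pos]
  have hεy1 : ε ≤ c2 * |ω1 * μ2 - 1| := by
    rw [habs21]; linarith [(div_lt_iff₀ hc2).1 hy1]
  have hεx2 : ε ≤ c1 * |ω2 * μ1 - 1| := by
    rw [habs12]; linarith [(div_lt_iff₀ hc1).1 hx2]
  have hL2ω1 : Leps ε c2 μ2 l2 ω1 = Real.log (ε / (c2 * y1)) / Real.log l2 := by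
    rw [Leps_eq μ2 ω1 hε hc2 hL2 hεy1, habs21]
  have hL1ω2 : Leps ε c1 μ1 l1 ω2 = Real.log (ε / (c1 * x2)) / Real.log l1 := by
    rw [Leps_eq μ1 ω2 hε hc1 hL1 hεx2, habs12]
  set A : ℝ := Leps ε c1 μ1 l1 ω2 with hA_def
  set B : ℝ := Leps ε c2 μ2 l2 ω1 with hB_def
  have hEω1 : Eeps p ε c1 c2 μ1 μ2 l1 l2 ω1 = (1 - p) * B := by
    unfold Eeps; rw [hL1ω1]; ring
  have hEω2 : Eeps p ε c1 c2 μ1 μ2 l1 l2 ω2 = p * A := by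
    unfold Eeps; rw [hL2ω2]; ring
  have hAnn : 0 ≤ A := Leps_nonneg _ _ _ _ _
  have hBnn : 0 ≤ B := Leps_nonneg _ _ _ _ _
  -- lower bound on E for ω above ω1
  have hhigh : ∀ ω : ℝ, ω1 < ω →
      (1 - p) * B < Eeps p ε c1 c2 μ1 μ2 l1 l2 ω := by
    intro ω hω
    have hμ2ω : ω1 * μ2 < ω * μ2 := mul_lt_mul_of_pos_right hω hμ2
    have hygt : y1 < ω * μ2 - 1 := by unfold y1; linarith
    have hypos : 0 < ω * μ2 - 1 := hy1pos.trans hygt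
    have hne2 : ω * μ2 ≠ 1 := by intro h; rw [h] at hypos; simp at hypos
    have habs : |ω * μ2 - 1| = ω * μ2 - 1 := abs_of_pos hypos
    have hmono := expr_mono hε hc2 hL2 hy1pos hygt
    have hge := Leps_ge ε c2 μ2 l2 ω hne2
    rw [habs] at hge
    have hL2big : B < Leps ε c2 μ2 l2 ω := by
      rw [hL2ω1]; linarith
    have h1 : 0 ≤ p * Leps ε c1 μ1 l1 ω :=
      mul_nonneg hp0.le (Leps_nonneg _ _ _ _ _)
    have h2 : (1 - p) * B < (1 - p) * Leps ε c2 μ2 l2 ω :=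
      mul_lt_mul_of_pos_left hL2big (by linarith)
    unfold Eeps; linarith
  -- lower bound on E for ω ≤ ω2 (non-strict part), strict if ω < ω2
  have hlow : ∀ ω : ℝ, ω ≤ ω2 →
      p * A ≤ Eeps p ε c1 c2 μ1 μ2 l1 l2 ω := by
    intro ω hω
    have hμ1ω : ω * μ1 ≤ ω2 * μ1 := mul_le_mul_of_nonneg_right hω hμ1.le
    have hxge : x2 ≤ 1 - ω * μ1 := by unfold x2; linarith
    have hxpos : 0 < 1 - ω * μ1 := hx2pos.trans_le hxge
    have hne1 : ω * μ1 ≠ 1 := by intro h; rw [h] at hxpos; simp at hxpos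
    have habs : |ω * μ1 - 1| = 1 - ω * μ1 := by
      rw [show ω * μ1 - 1 = -(1 - ω * μ1) by ring, abs_neg, abs_of_pos hxpos]
    have hmono := expr_mono_le hε hc1 hL1 hx2pos hxge
    have hge := Leps_ge ε c1 μ1 l1 ω hne1
    rw [habs] at hge
    have hL1big : A ≤ Leps ε c1 μ1 l1 ω := by
      rw [hL1ω2]; linarith
    have h1 : 0 ≤ (1 - p) * Leps ε c2 μ2 l2 ω :=
      mul_nonneg (by linarith) (Leps_nonneg _ _ _ _ _)
    have h2 : p * A ≤ p * Leps ε c1 μ1 l1 ω :=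
      mul_le_mul_of_nonneg_left hL1big hp0.le
    unfold Eeps; linarith
  have hlowstrict : ∀ ω : ℝ, ω < ω2 →
      p * A < Eeps p ε c1 c2 μ1 μ2 l1 l2 ω := by
    intro ω hω
    have hμ1ω : ω * μ1 < ω2 * μ1 := mul_lt_mul_of_pos_right hω hμ1
    have hxge : x2 < 1 - ω * μ1 := by unfold x2; linarith
    have hxpos : 0 < 1 - ω * μ1 := hx2pos.trans hxge
    have hne1 : ω * μ1 ≠ 1 := by intro h; rw [h] at hxpos; simp at hxpos
    have habs : |ω * μ1 - 1| = 1 - ω * μ1 := by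
      rw [show ω * μ1 - 1 = -(1 - ω * μ1) by ring, abs_neg, abs_of_pos hxpos]
    have hmono := expr_mono hε hc1 hL1 hx2pos hxge
    have hge := Leps_ge ε c1 μ1 l1 ω hne1
    rw [habs] at hge
    have hL1big : A < Leps ε c1 μ1 l1 ω := by
      rw [hL1ω2]; linarith
    have h1 : 0 ≤ (1 - p) * Leps ε c2 μ2 l2 ω :=
      mul_nonneg (by linarith) (Leps_nonneg _ _ _ _ _)
    have h2 : p * A < p * Leps ε c1 μ1 l1 ω :=
      mul_lt_mul_of_pos_left hL1big hp0
    unfold Eeps; linarith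
  -- middle estimate
  have hmid : ∀ ω : ℝ, ω2 < ω → ω < ω1 → ∃ t : ℝ, 0 < t ∧ t < 1 ∧
      (1 - t) * (p * A) + t * ((1 - p) * B) ≤ Eeps p ε c1 c2 μ1 μ2 l1 l2 ω := by
    intro ω hl hr
    have hd : 0 < ω1 - ω2 := by linarith
    refine ⟨(ω - ω2) / (ω1 - ω2), div_pos (by linarith) hd, (div_lt_one hd).2 (by linarith), ?_⟩
    set t : ℝ := (ω - ω2) / (ω1 - ω2) with ht_def
    have ht0 : 0 < t := div_pos (by linarith) hd
    have ht1 : t < 1 := (div_lt_one hd).2 (by linarith)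
    have hωeq : ω = (1 - t) * ω2 + t * ω1 := by
      unfold t; field_simp; ring
    have hxeq : 1 - ω * μ1 = (1 - t) * x2 + t * (ε / c1) := by
      rw [hωeq, hx2_def, show ε / c1 = 1 - ω1 * μ1 by linarith]; ring
    have hyeq : ω * μ2 - 1 = (1 - t) * (ε / c2) + t * y1 := by
      rw [hωeq, hy1_def, show ε / c2 = ω2 * μ2 - 1 by linarith]; ring
    have hμ1ω : ω * μ1 < ω1 * μ1 := mul_lt_mul_of_pos_right hr hμ1
    have hμ2ω : ω2 * μ2 < ω * μ2 := mul_lt_mul_of_pos_right hl hμ2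
    have hxpos : 0 < 1 - ω * μ1 := by linarith
    have hypos : 0 < ω * μ2 - 1 := by linarith
    have hne1 : ω * μ1 ≠ 1 := by intro h; rw [h] at hxpos; simp at hxpos
    have hne2 : ω * μ2 ≠ 1 := by intro h; rw [h] at hypos; simp at hypos
    have habs1 : |ω * μ1 - 1| = 1 - ω * μ1 := by
      rw [show ω * μ1 - 1 = -(1 - ω * μ1) by ring, abs_neg, abs_of_pos hxpos]
    have habs2 : |ω * μ2 - 1| = ω * μ2 - 1 := abs_of_pos hypos
    -- concavity for task 1
    have hzero1 : Real.log (ε / (c1 * (ε / c1))) / Real.log l1 = 0 := by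
      rw [show c1 * (ε / c1) = ε by field_simp, div_self hε.ne', Real.log_one, zero_div]
    have hc1conc := expr_concave hε hc1 hL1 hx2pos hεc1 ht0.le ht1.le
    rw [hzero1] at hc1conc
    have hA1 : (1 - t) * (Real.log (ε / (c1 * x2)) / Real.log l1)
        ≤ Real.log (ε / (c1 * (1 - ω * μ1))) / Real.log l1 := by
      rw [hxeq]; linarith
    -- concavity for task 2
    have hzero2 : Real.log (ε / (c2 * (ε / c2))) / Real.log l2 = 0 := by
      rw [show c2 * (ε / c2) = ε by field_simp, div_self hε.ne', Real.log_one, zero_div]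
    have hc2conc := expr_concave hε hc2 hL2 hεc2 hy1pos ht0.le ht1.le
    rw [hzero2] at hc2conc
    have hB1 : t * (Real.log (ε / (c2 * y1)) / Real.log l2)
        ≤ Real.log (ε / (c2 * (ω * μ2 - 1))) / Real.log l2 := by
      rw [hyeq]; linarith
    have hge1 := Leps_ge ε c1 μ1 l1 ω hne1
    have hge2 := Leps_ge ε c2 μ2 l2 ω hne2
    rw [habs1] at hge1
    rw [habs2] at hge2
    have hl1big : (1 - t) * A ≤ Leps ε c1 μ1 l1 ω := by
      rw [hL1ω2]; linarith
    have hl2big : t * B ≤ Leps ε c2 μ2 l2 ω := by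
      rw [hL2ω1]; linarith
    have h1 : p * ((1 - t) * A) ≤ p * Leps ε c1 μ1 l1 ω :=
      mul_le_mul_of_nonneg_left hl1big hp0.le
    have h2 : (1 - p) * (t * B) ≤ (1 - p) * Leps ε c2 μ2 l2 ω :=
      mul_le_mul_of_nonneg_left hl2big (by linarith)
    unfold Eeps; linarith
  constructor
  · intro hkey ω hω
    rw [hEω1]
    rcases lt_trichotomy ω ω1 with h | h | h
    · rcases le_or_gt ω ω2 with h2 | h2
      · have := hlow ω h2
        linarith
      · obtain ⟨t, ht0, ht1, hE⟩ := hmid ω h2 h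
        have hm := mul_lt_mul_of_pos_left hkey (by linarith : (0:ℝ) < 1 - t)
        linarith
    · exact absurd h hω
    · exact hhigh ω h
  · intro hkey ω hω
    rw [hEω2]
    rcases lt_trichotomy ω ω2 with h | h | h
    · exact hlowstrict ω h
    · exact absurd h hω
    · rcases lt_or_ge ω ω1 with h2 | h2
      · obtain ⟨t, ht0, ht1, hE⟩ := hmid ω h h2
        have hm := mul_lt_mul_of_pos_left hkey ht0
        linarith
      · rcases eq_or_lt_of_le h2 with he | hlt
        · rw [← he, hEω1]; linarith
        · have := hhigh ω hlt
          linarith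

lemma hord_of_small (μ1 μ2 c1 c2 ε : ℝ) (hμ1 : 0 < μ1) (hμ12 : μ1 < μ2)
    (hc1 : 0 < c1) (hc2 : 0 < c2) (hε : 0 < ε)
    (hεB : ε < c1 * c2 * (μ2 - μ1) / (c1 * μ1 + c2 * μ2)) :
    omegaE2 ε c2 μ2 < omegaE1 ε c1 μ1 := by
  have hμ2 : 0 < μ2 := hμ1.trans hμ12
  have hden : 0 < c1 * μ1 + c2 * μ2 := by positivity
  have heq : omegaE1 ε c1 μ1 - omegaE2 ε c2 μ2
      = (c1 * c2 * (μ2 - μ1) - ε * (c1 * μ1 + c2 * μ2)) / (c1 * c2 * μ1 * μ2) := by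
    unfold omegaE1 omegaE2; field_simp; ring
  have hnum : 0 < c1 * c2 * (μ2 - μ1) - ε * (c1 * μ1 + c2 * μ2) := by
    have := (lt_div_iff₀ hden).1 hεB
    linarith
  have : 0 < omegaE1 ε c1 μ1 - omegaE2 ε c2 μ2 := by
    rw [heq]; positivity
  linarith

set_option maxHeartbeats 1000000 in
lemma key_small_left (μ1 μ2 l1 l2 c1 c2 p : ℝ)
    (hμ1 : 0 < μ1) (hμ12 : μ1 < μ2)
    (hL1 : Real.log l1 < 0) (hL2 : Real.log l2 < 0)
    (hc1 : 0 < c1) (hc2 : 0 < c2) (hp0 : 0 < p) (hp1 : p < 1)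
    (hab : (1 - p) / (-Real.log l2) < p / (-Real.log l1)) :
    ∃ ε0 : ℝ, 0 < ε0 ∧ ε0 < c1 * c2 * (μ2 - μ1) / (c1 * μ1 + c2 * μ2) ∧
      ∀ ε ∈ Set.Ioo (0:ℝ) ε0,
        omegaE2 ε c2 μ2 < omegaE1 ε c1 μ1 ∧
        (1 - p) * Leps ε c2 μ2 l2 (omegaE1 ε c1 μ1)
          < p * Leps ε c1 μ1 l1 (omegaE2 ε c2 μ2) := by
  have hμ2 : 0 < μ2 := hμ1.trans hμ12
  set L := Real.log l1 with hL_def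
  set M := Real.log l2 with hM_def
  set a : ℝ := p / (-L) with ha_def
  set b : ℝ := (1 - p) / (-M) with hb_def
  have ha : 0 < a := div_pos hp0 (by linarith)
  have hb : 0 < b := div_pos (by linarith) (by linarith)
  have hab' : 0 < a - b := by linarith
  set x0 : ℝ := 1 - μ1 / μ2 with hx0_def
  have hx0pos : 0 < x0 := by
    have : μ1 / μ2 < 1 := (div_lt_one hμ2).2 hμ12
    unfold x0; linarith
  set y0 : ℝ := μ2 / μ1 - 1 with hy0_def
  have hy0pos : 0 < y0 := by
    have : 1 < μ2 / μ1 := (one_lt_div hμ1).2 hμ12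
    unfold y0; linarith
  set B0 : ℝ := c1 * c2 * (μ2 - μ1) / (c1 * μ1 + c2 * μ2) with hB0_def
  have hB0 : 0 < B0 := by
    apply div_pos (mul_pos (mul_pos hc1 hc2) (by linarith)) (by positivity)
  set D : ℝ := b * (Real.log c2 + Real.log y0) - a * (Real.log c1 + Real.log (x0 / 2))
    with hD_def
  set εexp : ℝ := Real.exp (-D / (a - b)) with hεexp_def
  set εa : ℝ := x0 * c2 * μ2 / (2 * μ1) with hεa_def
  have hεapos : 0 < εa := by positivity
  refine ⟨min (min (B0 / 2) εa) εexp,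
    lt_min (lt_min (by linarith) hεapos) (Real.exp_pos _), ?_, ?_⟩
  · calc min (min (B0 / 2) εa) εexp ≤ min (B0 / 2) εa := min_le_left _ _
      _ ≤ B0 / 2 := min_le_left _ _
      _ < B0 := by linarith
  rintro ε ⟨hε, hεlt⟩
  have hεB0 : ε < B0 := lt_of_lt_of_le hεlt (by
    calc min (min (B0 / 2) εa) εexp ≤ min (B0 / 2) εa := min_le_left _ _
      _ ≤ B0 / 2 := min_le_left _ _
      _ ≤ B0 := by linarith)
  have hεa' : ε < εa := lt_of_lt_of_le hεlt (le_trans (min_le_left _ _) (min_le_right _ _))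
  have hεexp' : ε < εexp := lt_of_lt_of_le hεlt (min_le_right _ _)
  have hord := hord_of_small μ1 μ2 c1 c2 ε hμ1 hμ12 hc1 hc2 hε hεB0
  refine ⟨hord, ?_⟩
  set ω1 : ℝ := omegaE1 ε c1 μ1 with hω1_def
  set ω2 : ℝ := omegaE2 ε c2 μ2 with hω2_def
  set y1 : ℝ := ω1 * μ2 - 1 with hy1_def
  set x2 : ℝ := 1 - ω2 * μ1 with hx2_def
  have hω1μ1 : ω1 * μ1 = 1 - ε / c1 := by
    unfold ω1; unfold omegaE1; field_simp
  have hω2μ2 : ω2 * μ2 = 1 + ε / c2 := by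
    unfold ω2; unfold omegaE2; field_simp
  have hεc1 : 0 < ε / c1 := div_pos hε hc1
  have hεc2 : 0 < ε / c2 := div_pos hε hc2
  have hy1 : ε / c2 < y1 := by
    have : ω2 * μ2 < ω1 * μ2 := mul_lt_mul_of_pos_right hord hμ2
    unfold y1; rw [hω2μ2] at this; linarith
  have hx2 : ε / c1 < x2 := by
    have : ω2 * μ1 < ω1 * μ1 := mul_lt_mul_of_pos_right hord hμ1
    unfold x2; rw [hω1μ1] at this; linarith
  have hy1pos : 0 < y1 := hεc2.trans hy1
  have hx2pos : 0 < x2 := hεc1.trans hx2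
  have habs21 : |ω1 * μ2 - 1| = y1 := abs_of_pos hy1pos
  have habs12 : |ω2 * μ1 - 1| = x2 := by
    rw [show ω2 * μ1 - 1 = -x2 by unfold x2; ring, abs_neg, abs_of_pos hx2pos]
  have hεy1 : ε ≤ c2 * |ω1 * μ2 - 1| := by
    rw [habs21]; linarith [(div_lt_iff₀ hc2).1 hy1]
  have hεx2 : ε ≤ c1 * |ω2 * μ1 - 1| := by
    rw [habs12]; linarith [(div_lt_iff₀ hc1).1 hx2]
  have hLB : Leps ε c2 μ2 l2 ω1 = Real.log (ε / (c2 * y1)) / M := by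
    rw [Leps_eq μ2 ω1 hε hc2 hL2 hεy1, habs21]
  have hLA : Leps ε c1 μ1 l1 ω2 = Real.log (ε / (c1 * x2)) / L := by
    rw [Leps_eq μ1 ω2 hε hc1 hL1 hεx2, habs12]
  -- explicit formulas
  have hy1le : y1 ≤ y0 := by
    have h1 : y1 = y0 - ε * μ2 / (c1 * μ1) := by
      unfold y1 ω1 y0; unfold omegaE1; field_simp; ring
    have h2 : 0 ≤ ε * μ2 / (c1 * μ1) := by positivity
    clear_value y1 y0
    linarith only [h1, h2]
  have hx2ge : x0 / 2 ≤ x2 := by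
    have h1 : x2 = x0 - ε * μ1 / (c2 * μ2) := by
      unfold x2 ω2 x0; unfold omegaE2; field_simp; ring
    have hq : 0 < c2 * μ2 := mul_pos hc2 hμ2
    have h2 : ε * μ1 / (c2 * μ2) ≤ x0 / 2 := by
      have h3 : x0 * c2 * μ2 / (2 * μ1) * μ1 = x0 / 2 * (c2 * μ2) := by
        field_simp
      have h4 := mul_lt_mul_of_pos_right hεa' hμ1
      rw [hεa_def] at h4
      rw [div_le_iff₀ hq]
      rw [h3] at h4
      linarith
    linarith
  -- log-bound from ε < εexp
  have hu : (a - b) * Real.log ε < -D := by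
    have h1 : Real.log ε < -D / (a - b) := by
      have := Real.log_lt_log hε hεexp'
      rwa [hεexp_def, Real.log_exp] at this
    have h2 := mul_lt_mul_of_pos_left h1 hab'
    rwa [mul_div_cancel₀ _ hab'.ne'] at h2
  rw [hLB, hLA]
  have e1 : (1 - p) * (Real.log (ε / (c2 * y1)) / M)
      = b * (Real.log c2 + Real.log y1 - Real.log ε) := by
    rw [log_div_expand hε hc2 hy1pos, hb_def]
    field_simp
    ring
  have e2 : p * (Real.log (ε / (c1 * x2)) / L)
      = a * (Real.log c1 + Real.log x2 - Real.log ε) := by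
    rw [log_div_expand hε hc1 hx2pos, ha_def]
    field_simp
    ring
  rw [e1, e2]
  have hly : Real.log y1 ≤ Real.log y0 := Real.log_le_log hy1pos hy1le
  have hlx : Real.log (x0 / 2) ≤ Real.log x2 := Real.log_le_log (by positivity) hx2ge
  have hmain : b * (Real.log c2 + Real.log y0 - Real.log ε)
      < a * (Real.log c1 + Real.log (x0 / 2) - Real.log ε) := by
    rw [hD_def] at hu; linarith
  have hfin1 : b * (Real.log c2 + Real.log y1 - Real.log ε)
      ≤ b * (Real.log c2 + Real.log y0 - Real.log ε) :=
    mul_le_mul_of_nonneg_left (by linarith) hb.le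
  have hfin2 : a * (Real.log c1 + Real.log (x0 / 2) - Real.log ε)
      ≤ a * (Real.log c1 + Real.log x2 - Real.log ε) :=
    mul_le_mul_of_nonneg_left (by linarith) ha.le
  linarith

set_option maxHeartbeats 1000000 in
lemma key_small_right (μ1 μ2 l1 l2 c1 c2 p : ℝ)
    (hμ1 : 0 < μ1) (hμ12 : μ1 < μ2)
    (hL1 : Real.log l1 < 0) (hL2 : Real.log l2 < 0)
    (hc1 : 0 < c1) (hc2 : 0 < c2) (hp0 : 0 < p) (hp1 : p < 1)
    (hab : p / (-Real.log l1) < (1 - p) / (-Real.log l2)) :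
    ∃ ε0 : ℝ, 0 < ε0 ∧ ε0 < c1 * c2 * (μ2 - μ1) / (c1 * μ1 + c2 * μ2) ∧
      ∀ ε ∈ Set.Ioo (0:ℝ) ε0,
        omegaE2 ε c2 μ2 < omegaE1 ε c1 μ1 ∧
        p * Leps ε c1 μ1 l1 (omegaE2 ε c2 μ2)
          < (1 - p) * Leps ε c2 μ2 l2 (omegaE1 ε c1 μ1) := by
  have hμ2 : 0 < μ2 := hμ1.trans hμ12
  set L := Real.log l1 with hL_def
  set M := Real.log l2 with hM_def
  set a : ℝ := p / (-L) with ha_def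
  set b : ℝ := (1 - p) / (-M) with hb_def
  have ha : 0 < a := div_pos hp0 (by linarith)
  have hb : 0 < b := div_pos (by linarith) (by linarith)
  have hab' : 0 < b - a := by linarith
  set x0 : ℝ := 1 - μ1 / μ2 with hx0_def
  have hx0pos : 0 < x0 := by
    have : μ1 / μ2 < 1 := (div_lt_one hμ2).2 hμ12
    unfold x0; linarith
  set y0 : ℝ := μ2 / μ1 - 1 with hy0_def
  have hy0pos : 0 < y0 := by
    have : 1 < μ2 / μ1 := (one_lt_div hμ1).2 hμ12
    unfold y0; linarith
  set B0 : ℝ := c1 * c2 * (μ2 - μ1) / (c1 * μ1 + c2 * μ2) with hB0_def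
  have hB0 : 0 < B0 := by
    apply div_pos (mul_pos (mul_pos hc1 hc2) (by linarith)) (by positivity)
  set D : ℝ := a * (Real.log c1 + Real.log x0) - b * (Real.log c2 + Real.log (y0 / 2))
    with hD_def
  set εexp : ℝ := Real.exp (-D / (b - a)) with hεexp_def
  set εb : ℝ := y0 * c1 * μ1 / (2 * μ2) with hεb_def
  have hεbpos : 0 < εb := by positivity
  refine ⟨min (min (B0 / 2) εb) εexp,
    lt_min (lt_min (by linarith) hεbpos) (Real.exp_pos _), ?_, ?_⟩
  · calc min (min (B0 / 2) εb) εexp ≤ min (B0 / 2) εb := min_le_left _ _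
      _ ≤ B0 / 2 := min_le_left _ _
      _ < B0 := by linarith
  rintro ε ⟨hε, hεlt⟩
  have hεB0 : ε < B0 := lt_of_lt_of_le hεlt (by
    calc min (min (B0 / 2) εb) εexp ≤ min (B0 / 2) εb := min_le_left _ _
      _ ≤ B0 / 2 := min_le_left _ _
      _ ≤ B0 := by linarith)
  have hεb' : ε < εb := lt_of_lt_of_le hεlt (le_trans (min_le_left _ _) (min_le_right _ _))
  have hεexp' : ε < εexp := lt_of_lt_of_le hεlt (min_le_right _ _)
  have hord := hord_of_small μ1 μ2 c1 c2 ε hμ1 hμ12 hc1 hc2 hε hεB0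
  refine ⟨hord, ?_⟩
  set ω1 : ℝ := omegaE1 ε c1 μ1 with hω1_def
  set ω2 : ℝ := omegaE2 ε c2 μ2 with hω2_def
  set y1 : ℝ := ω1 * μ2 - 1 with hy1_def
  set x2 : ℝ := 1 - ω2 * μ1 with hx2_def
  have hω1μ1 : ω1 * μ1 = 1 - ε / c1 := by
    unfold ω1; unfold omegaE1; field_simp
  have hω2μ2 : ω2 * μ2 = 1 + ε / c2 := by
    unfold ω2; unfold omegaE2; field_simp
  have hεc1 : 0 < ε / c1 := div_pos hε hc1
  have hεc2 : 0 < ε / c2 := div_pos hε hc2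
  have hy1 : ε / c2 < y1 := by
    have : ω2 * μ2 < ω1 * μ2 := mul_lt_mul_of_pos_right hord hμ2
    unfold y1; rw [hω2μ2] at this; linarith
  have hx2 : ε / c1 < x2 := by
    have : ω2 * μ1 < ω1 * μ1 := mul_lt_mul_of_pos_right hord hμ1
    unfold x2; rw [hω1μ1] at this; linarith
  have hy1pos : 0 < y1 := hεc2.trans hy1
  have hx2pos : 0 < x2 := hεc1.trans hx2
  have habs21 : |ω1 * μ2 - 1| = y1 := abs_of_pos hy1pos
  have habs12 : |ω2 * μ1 - 1| = x2 := by
    rw [show ω2 * μ1 - 1 = -x2 by unfold x2; ring, abs_neg, abs_of_pos hx2pos]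
  have hεy1 : ε ≤ c2 * |ω1 * μ2 - 1| := by
    rw [habs21]; linarith [(div_lt_iff₀ hc2).1 hy1]
  have hεx2 : ε ≤ c1 * |ω2 * μ1 - 1| := by
    rw [habs12]; linarith [(div_lt_iff₀ hc1).1 hx2]
  have hLB : Leps ε c2 μ2 l2 ω1 = Real.log (ε / (c2 * y1)) / M := by
    rw [Leps_eq μ2 ω1 hε hc2 hL2 hεy1, habs21]
  have hLA : Leps ε c1 μ1 l1 ω2 = Real.log (ε / (c1 * x2)) / L := by
    rw [Leps_eq μ1 ω2 hε hc1 hL1 hεx2, habs12]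
  -- explicit formulas
  have hx2le : x2 ≤ x0 := by
    have h1 : x2 = x0 - ε * μ1 / (c2 * μ2) := by
      unfold x2 ω2 x0; unfold omegaE2; field_simp; ring
    have h2 : 0 ≤ ε * μ1 / (c2 * μ2) := by positivity
    clear_value x2 x0
    linarith only [h1, h2]
  have hy1ge : y0 / 2 ≤ y1 := by
    have h1 : y1 = y0 - ε * μ2 / (c1 * μ1) := by
      unfold y1 ω1 y0; unfold omegaE1; field_simp; ring
    have hq : 0 < c1 * μ1 := mul_pos hc1 hμ1
    have h2 : ε * μ2 / (c1 * μ1) ≤ y0 / 2 := by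
      have h3 : y0 * c1 * μ1 / (2 * μ2) * μ2 = y0 / 2 * (c1 * μ1) := by
        field_simp
      have h4 := mul_lt_mul_of_pos_right hεb' hμ2
      rw [hεb_def] at h4
      rw [div_le_iff₀ hq]
      rw [h3] at h4
      linarith
    linarith
  have hu : (b - a) * Real.log ε < -D := by
    have h1 : Real.log ε < -D / (b - a) := by
      have := Real.log_lt_log hε hεexp'
      rwa [hεexp_def, Real.log_exp] at this
    have h2 := mul_lt_mul_of_pos_left h1 hab'
    rwa [mul_div_cancel₀ _ hab'.ne'] at h2
  rw [hLB, hLA]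
  have e1 : (1 - p) * (Real.log (ε / (c2 * y1)) / M)
      = b * (Real.log c2 + Real.log y1 - Real.log ε) := by
    rw [log_div_expand hε hc2 hy1pos, hb_def]
    field_simp
    ring
  have e2 : p * (Real.log (ε / (c1 * x2)) / L)
      = a * (Real.log c1 + Real.log x2 - Real.log ε) := by
    rw [log_div_expand hε hc1 hx2pos, ha_def]
    field_simp
    ring
  rw [e1, e2]
  have hlx : Real.log x2 ≤ Real.log x0 := Real.log_le_log hx2pos hx2le
  have hly : Real.log (y0 / 2) ≤ Real.log y1 := Real.log_le_log (by positivity) hy1ge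
  have hmain : a * (Real.log c1 + Real.log x0 - Real.log ε)
      < b * (Real.log c2 + Real.log (y0 / 2) - Real.log ε) := by
    rw [hD_def] at hu; linarith
  have hfin1 : a * (Real.log c1 + Real.log x2 - Real.log ε)
      ≤ a * (Real.log c1 + Real.log x0 - Real.log ε) :=
    mul_le_mul_of_nonneg_left (by linarith) ha.le
  have hfin2 : b * (Real.log c2 + Real.log (y0 / 2) - Real.log ε)
      ≤ b * (Real.log c2 + Real.log y1 - Real.log ε) :=
    mul_le_mul_of_nonneg_left (by linarith) hb.le
  linarith

/-- For small enough tolerance, the unique minimizer of `E_ε` is `ω_(ε,1)` when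
`p > p_0` and `ω_(ε,2)` when `p < p_0`; consequently the minimizers converge to
`1/μ1` (resp. `1/μ2`) as `ε → 0⁺`. -/
theorem Eeps_minimizer_limit (μ1 μ2 l1 l2 c1 c2 p : ℝ)
    (hμ1 : 0 < μ1) (hμ12 : μ1 < μ2) (hμ2 : μ2 < 2)
    (hl1 : l1 = 1 - μ1 / 2) (hl2 : l2 = 1 - μ2 / 2)
    (hc1 : 0 < c1) (hc2 : 0 < c2) (hp0 : 0 < p) (hp1 : p < 1) :
    (p > pZero l1 l2 →
      (∃ ε0 : ℝ, 0 < ε0 ∧ ε0 < c1 * c2 * (μ2 - μ1) / (c1 * μ1 + c2 * μ2) ∧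
        ∀ ε ∈ Set.Ioo (0 : ℝ) ε0, ∀ ω : ℝ, ω ≠ omegaE1 ε c1 μ1 →
          Eeps p ε c1 c2 μ1 μ2 l1 l2 ω >
            Eeps p ε c1 c2 μ1 μ2 l1 l2 (omegaE1 ε c1 μ1)) ∧
      Filter.Tendsto (fun ε : ℝ => omegaE1 ε c1 μ1)
        (nhdsWithin 0 (Set.Ioi 0)) (nhds (1 / μ1))) ∧
    (p < pZero l1 l2 →
      (∃ ε0 : ℝ, 0 < ε0 ∧
        ∀ ε ∈ Set.Ioo (0 : ℝ) ε0, ∀ ω : ℝ, ω ≠ omegaE2 ε c2 μ2 →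
          Eeps p ε c1 c2 μ1 μ2 l1 l2 ω >
            Eeps p ε c1 c2 μ1 μ2 l1 l2 (omegaE2 ε c2 μ2)) ∧
      Filter.Tendsto (fun ε : ℝ => omegaE2 ε c2 μ2)
        (nhdsWithin 0 (Set.Ioi 0)) (nhds (1 / μ2))) := by
  have hμ2pos : 0 < μ2 := hμ1.trans hμ12
  have hl1pos : 0 < l1 := by rw [hl1]; linarith
  have hl1lt : l1 < 1 := by rw [hl1]; linarith
  have hl2pos : 0 < l2 := by rw [hl2]; linarith
  have hl2lt : l2 < 1 := by rw [hl2]; linarith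
  have hL1 : Real.log l1 < 0 := Real.log_neg hl1pos hl1lt
  have hL2 : Real.log l2 < 0 := Real.log_neg hl2pos hl2lt
  have hLM : Real.log l1 + Real.log l2 < 0 := by linarith
  constructor
  · intro hp
    have hpz : p * (Real.log l1 + Real.log l2) < Real.log l1 := by
      rw [gt_iff_lt] at hp
      unfold pZero at hp
      exact (div_lt_iff_of_neg hLM).1 hp
    have hab : (1 - p) / (-Real.log l2) < p / (-Real.log l1) := by
      rw [div_lt_div_iff₀ (by linarith) (by linarith)]
      nlinarith [hpz]
    obtain ⟨ε0, hε0pos, hε0B, hall⟩ :=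
      key_small_left μ1 μ2 l1 l2 c1 c2 p hμ1 hμ12 hL1 hL2 hc1 hc2 hp0 hp1 hab
    refine ⟨⟨ε0, hε0pos, hε0B, ?_⟩, ?_⟩
    · intro ε hεm ω hω
      obtain ⟨hord, hkey⟩ := hall ε hεm
      exact (minimizer_core μ1 μ2 l1 l2 c1 c2 p ε hμ1 hμ12 hL1 hL2 hc1 hc2
        hp0 hp1 hεm.1 hord).1 hkey ω hω
    · have hcont : Filter.Tendsto (fun ε : ℝ => omegaE1 ε c1 μ1)
          (nhds 0) (nhds (1 / μ1)) := by
        unfold omegaE1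
        have h := tendsto_const_nhds (α := ℝ) (x := 1 / μ1) (f := nhds (0:ℝ))
          |>.sub ((continuous_id.div_const (c1 * μ1)).tendsto 0)
        simpa using h
      exact hcont.mono_left nhdsWithin_le_nhds
  · intro hp
    have hpz : Real.log l1 < p * (Real.log l1 + Real.log l2) := by
      unfold pZero at hp
      exact (lt_div_iff_of_neg hLM).1 hp
    have hab : p / (-Real.log l1) < (1 - p) / (-Real.log l2) := by
      rw [div_lt_div_iff₀ (by linarith) (by linarith)]
      nlinarith [hpz]
    obtain ⟨ε0, hε0pos, hε0B, hall⟩ :=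
      key_small_right μ1 μ2 l1 l2 c1 c2 p hμ1 hμ12 hL1 hL2 hc1 hc2 hp0 hp1 hab
    refine ⟨⟨ε0, hε0pos, ?_⟩, ?_⟩
    · intro ε hεm ω hω
      obtain ⟨hord, hkey⟩ := hall ε hεm
      exact (minimizer_core μ1 μ2 l1 l2 c1 c2 p ε hμ1 hμ12 hL1 hL2 hc1 hc2
        hp0 hp1 hεm.1 hord).2 hkey ω hω
    · have hcont : Filter.Tendsto (fun ε : ℝ => omegaE2 ε c2 μ2)
          (nhds 0) (nhds (1 / μ2)) := by
        unfold omegaE2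
        have h := tendsto_const_nhds (α := ℝ) (x := 1 / μ2) (f := nhds (0:ℝ))
          |>.add ((continuous_id.div_const (c2 * μ2)).tendsto 0)
        simpa using h
      exact hcont.mono_left nhdsWithin_le_nhds
end

section
/- Assume 0 < ε < c1·c2·(μ2 − μ1)/(c1·μ1 + c2·μ2). Then there exists m0 ≥ 0 such that for all real m1, m2 with m0 < m1 < m2, one has E_ε(ω_{m1}) ≤ E_ε(ω_{m2}); that is, training the solution-error loss with more Jacobi iterations eventually cannot decrease the expected iteration count at tolerance ε. -/
/- Abstract lemmas about `x = (a μ1 t + b μ2 s)/(a μ1² t + b μ2² s)`. -/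
section aux
variable {a b t s μ1 μ2 : ℝ}

private lemma aux_den_pos (ha : 0 < a) (hb : 0 < b) (ht : 0 < t) (hs : 0 < s)
    (hμ1 : 0 < μ1) (hμ2 : 0 < μ2) :
    0 < a * μ1 ^ 2 * t + b * μ2 ^ 2 * s := by positivity

private lemma aux_mul1_lt_one (ha : 0 < a) (hb : 0 < b) (ht : 0 < t) (hs : 0 < s)
    (hμ1 : 0 < μ1) (hμ12 : μ1 < μ2) :
    (a * μ1 * t + b * μ2 * s) / (a * μ1 ^ 2 * t + b * μ2 ^ 2 * s) * μ1 < 1 := by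
  have hμ2 : 0 < μ2 := hμ1.trans hμ12
  have hden := aux_den_pos ha hb ht hs hμ1 hμ2
  rw [div_mul_eq_mul_div, div_lt_one hden]
  nlinarith [mul_pos (mul_pos (mul_pos hb hμ1) (sub_pos.2 hμ12)) hs]

private lemma aux_one_lt_mul2 (ha : 0 < a) (hb : 0 < b) (ht : 0 < t) (hs : 0 < s)
    (hμ1 : 0 < μ1) (hμ12 : μ1 < μ2) :
    1 < (a * μ1 * t + b * μ2 * s) / (a * μ1 ^ 2 * t + b * μ2 ^ 2 * s) * μ2 := by
  have hμ2 : 0 < μ2 := hμ1.trans hμ12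
  have hden := aux_den_pos ha hb ht hs hμ1 hμ2
  rw [div_mul_eq_mul_div, lt_div_iff₀ hden]
  nlinarith [mul_pos (mul_pos (mul_pos ha hμ1) (sub_pos.2 hμ12)) ht]

private lemma aux_gap (ha : 0 < a) (hb : 0 < b) (ht : 0 < t) (hs : 0 < s)
    (hμ1 : 0 < μ1) (hμ12 : μ1 < μ2) :
    1 - (a * μ1 * t + b * μ2 * s) / (a * μ1 ^ 2 * t + b * μ2 ^ 2 * s) * μ1 ≤
      (b * μ2 * (μ2 - μ1) / (a * μ1 ^ 2)) * (s / t) := by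
  have hμ2 : 0 < μ2 := hμ1.trans hμ12
  have hden := aux_den_pos ha hb ht hs hμ1 hμ2
  have h1 : 1 - (a * μ1 * t + b * μ2 * s) / (a * μ1 ^ 2 * t + b * μ2 ^ 2 * s) * μ1 =
      (b * μ2 * (μ2 - μ1) * s) / (a * μ1 ^ 2 * t + b * μ2 ^ 2 * s) := by
    field_simp
    ring
  have h2 : (b * μ2 * (μ2 - μ1) / (a * μ1 ^ 2)) * (s / t) =
      (b * μ2 * (μ2 - μ1) * s) / (a * μ1 ^ 2 * t) := by
    rw [div_mul_div_comm]
  rw [h1, h2]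
  have hμ21 : 0 < μ2 - μ1 := sub_pos.2 hμ12
  have hN : 0 ≤ b * μ2 * (μ2 - μ1) * s := by positivity
  have hD : 0 < a * μ1 ^ 2 * t := by positivity
  apply div_le_div_of_nonneg_left hN hD
  nlinarith [mul_pos (mul_pos hb (pow_pos hμ2 2)) hs]

private lemma aux_mono {t1 s1 t2 s2 : ℝ} (ha : 0 < a) (hb : 0 < b)
    (ht1 : 0 < t1) (hs1 : 0 < s1) (ht2 : 0 < t2) (hs2 : 0 < s2)
    (hμ1 : 0 < μ1) (hμ12 : μ1 < μ2) (hts : t1 * s2 < t2 * s1) :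
    (a * μ1 * t1 + b * μ2 * s1) / (a * μ1 ^ 2 * t1 + b * μ2 ^ 2 * s1) <
    (a * μ1 * t2 + b * μ2 * s2) / (a * μ1 ^ 2 * t2 + b * μ2 ^ 2 * s2) := by
  have hμ2 : 0 < μ2 := hμ1.trans hμ12
  have hden1 := aux_den_pos ha hb ht1 hs1 hμ1 hμ2
  have hden2 := aux_den_pos ha hb ht2 hs2 hμ1 hμ2
  rw [div_lt_div_iff₀ hden1 hden2]
  have key : (a * μ1 * t2 + b * μ2 * s2) * (a * μ1 ^ 2 * t1 + b * μ2 ^ 2 * s1) -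
      (a * μ1 * t1 + b * μ2 * s1) * (a * μ1 ^ 2 * t2 + b * μ2 ^ 2 * s2) =
      a * b * μ1 * μ2 * (μ2 - μ1) * (t2 * s1 - t1 * s2) := by ring
  nlinarith [mul_pos (mul_pos (mul_pos (mul_pos (mul_pos ha hb) hμ1) hμ2) (sub_pos.2 hμ12))
    (sub_pos.2 hts)]

end aux

private lemma Leps1_eq_zero {ε c1 μ1 l1 ω : ℝ} (hc1 : 0 < c1) (hl1pos : 0 < l1)
    (hl1lt : l1 < 1) (h1 : ω * μ1 < 1) (h2 : 1 - ω * μ1 ≤ ε / c1) :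
    Leps ε c1 μ1 l1 ω = 0 := by
  have hne : ω * μ1 ≠ 1 := ne_of_lt h1
  simp only [Leps, if_neg hne]
  apply max_eq_left
  have habs : |ω * μ1 - 1| = 1 - ω * μ1 := by
    rw [abs_of_neg (by linarith)]; ring
  rw [habs]
  have hposgap : 0 < 1 - ω * μ1 := by linarith
  have hle : c1 * (1 - ω * μ1) ≤ ε := by
    rw [le_div_iff₀ hc1] at h2; linarith
  have hnum : 0 ≤ Real.log (ε / (c1 * (1 - ω * μ1))) := by
    apply Real.log_nonneg
    rw [le_div_iff₀ (by positivity)]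
    linarith
  have hden : Real.log l1 < 0 := Real.log_neg hl1pos hl1lt
  exact div_nonpos_iff.mpr (Or.inl ⟨hnum, hden.le⟩)

private lemma Leps2_mono {ε c2 μ2 l2 w1 w2 : ℝ} (hc2 : 0 < c2) (hμ2pos : 0 < μ2)
    (hl2pos : 0 < l2) (hl2lt1 : l2 < 1) (hε : 0 < ε)
    (h1 : 1 < w1 * μ2) (h12 : w1 < w2) :
    Leps ε c2 μ2 l2 w1 ≤ Leps ε c2 μ2 l2 w2 := by
  have h2 : w1 * μ2 < w2 * μ2 := by nlinarith
  have h2' : 1 < w2 * μ2 := h1.trans h2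
  simp only [Leps, if_neg (ne_of_gt h1), if_neg (ne_of_gt h2')]
  apply max_le_max le_rfl
  have hab1 : |w1 * μ2 - 1| = w1 * μ2 - 1 := abs_of_pos (by linarith)
  have hab2 : |w2 * μ2 - 1| = w2 * μ2 - 1 := abs_of_pos (by linarith)
  rw [hab1, hab2]
  have hX2pos : 0 < ε / (c2 * (w2 * μ2 - 1)) := by
    apply div_pos hε
    have : 0 < w2 * μ2 - 1 := by linarith
    positivity
  have hXle : ε / (c2 * (w2 * μ2 - 1)) ≤ ε / (c2 * (w1 * μ2 - 1)) := by
    apply div_le_div_of_nonneg_left hε.le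
    · have : 0 < w1 * μ2 - 1 := by linarith
      positivity
    · exact mul_le_mul_of_nonneg_left (by linarith) hc2.le
  have hlog : Real.log (ε / (c2 * (w2 * μ2 - 1))) ≤ Real.log (ε / (c2 * (w1 * μ2 - 1))) :=
    Real.log_le_log hX2pos hXle
  have hll2 : Real.log l2 < 0 := Real.log_neg hl2pos hl2lt1
  have h := div_nonneg_iff.mpr (Or.inr ⟨sub_nonpos.2 hlog, hll2.le⟩)
  rw [sub_div] at h
  linarith

/-- Eventually, training the solution-error loss with more Jacobi iterations
cannot decrease the expected iteration count at tolerance `ε`. -/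
theorem Eeps_omegaM_eventually_monotone (μ1 μ2 l1 l2 c1 c2 p : ℝ)
    (hμ1 : 0 < μ1) (hμ12 : μ1 < μ2) (hμ2 : μ2 < 2)
    (hl1 : l1 = 1 - μ1 / 2) (hl2 : l2 = 1 - μ2 / 2)
    (hc1 : 0 < c1) (hc2 : 0 < c2) (hp0 : 0 < p) (hp1 : p < 1)
    (ε : ℝ) (hε : 0 < ε)
    (hεlt : ε < c1 * c2 * (μ2 - μ1) / (c1 * μ1 + c2 * μ2)) :
    ∃ m0 : ℝ, 0 ≤ m0 ∧ ∀ m1 m2 : ℝ, m0 < m1 → m1 < m2 →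
      Eeps p ε c1 c2 μ1 μ2 l1 l2 (omegaM p c1 c2 μ1 μ2 l1 l2 m1) ≤
      Eeps p ε c1 c2 μ1 μ2 l1 l2 (omegaM p c1 c2 μ1 μ2 l1 l2 m2) := by
  have hμ2pos : 0 < μ2 := hμ1.trans hμ12
  have hl1pos : 0 < l1 := by rw [hl1]; linarith
  have hl1lt : l1 < 1 := by rw [hl1]; linarith
  have hl2pos : 0 < l2 := by rw [hl2]; linarith
  have hl2lt1 : l2 < 1 := by rw [hl2]; linarith
  have hl21 : l2 < l1 := by rw [hl1, hl2]; linarith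
  have ha : 0 < p * c1 ^ 2 := by positivity
  have hb : 0 < (1 - p) * c2 ^ 2 := by
    have : 0 < 1 - p := by linarith
    positivity
  have ht : ∀ m : ℝ, 0 < l1 ^ (2 * m) := fun m => Real.rpow_pos_of_pos hl1pos _
  have hs : ∀ m : ℝ, 0 < l2 ^ (2 * m) := fun m => Real.rpow_pos_of_pos hl2pos _
  set C : ℝ := (1 - p) * c2 ^ 2 * μ2 * (μ2 - μ1) / (p * c1 ^ 2 * μ1 ^ 2) with hC
  have hCpos : 0 < C := by
    have h1 : 0 < 1 - p := by linarith
    have h2 : 0 < μ2 - μ1 := by linarith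
    positivity
  -- the ratio r = l2 / l1 ∈ (0,1)
  set r : ℝ := l2 / l1 with hr
  have hrpos : 0 < r := div_pos hl2pos hl1pos
  have hrlt : r < 1 := (div_lt_one hl1pos).2 hl21
  have hrat : ∀ m : ℝ, l2 ^ (2 * m) / l1 ^ (2 * m) = r ^ (2 * m) := fun m =>
    (Real.div_rpow hl2pos.le hl1pos.le _).symm
  -- tendsto
  have htend2m : Filter.Tendsto (fun m : ℝ => 2 * m) Filter.atTop Filter.atTop := by
    apply Filter.Tendsto.const_mul_atTop (by norm_num : (0:ℝ) < 2) Filter.tendsto_id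
  have htendr : Filter.Tendsto (fun m : ℝ => C * r ^ (2 * m)) Filter.atTop (nhds 0) := by
    have h0 : Filter.Tendsto (fun m : ℝ => r ^ (2 * m)) Filter.atTop (nhds 0) :=
      (tendsto_rpow_atTop_of_base_lt_one r (by linarith) hrlt).comp htend2m
    have := h0.const_mul C
    simpa using this
  have hev : ∀ᶠ m : ℝ in Filter.atTop, C * r ^ (2 * m) < ε / c1 :=
    htendr.eventually_lt_const (by positivity)
  obtain ⟨a0, ha0⟩ := Filter.eventually_atTop.mp hev
  refine ⟨max a0 0, le_max_right _ _, ?_⟩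
  intro m1 m2 hm1 hm12
  have hm2 : max a0 0 < m2 := hm1.trans hm12
  -- facts about ω m for m > m0
  have homega : ∀ m : ℝ, omegaM p c1 c2 μ1 μ2 l1 l2 m =
      (p * c1 ^ 2 * μ1 * l1 ^ (2 * m) + (1 - p) * c2 ^ 2 * μ2 * l2 ^ (2 * m)) /
      (p * c1 ^ 2 * μ1 ^ 2 * l1 ^ (2 * m) + (1 - p) * c2 ^ 2 * μ2 ^ 2 * l2 ^ (2 * m)) :=
    fun m => rfl
  have hlt1 : ∀ m : ℝ, omegaM p c1 c2 μ1 μ2 l1 l2 m * μ1 < 1 := by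
    intro m; rw [homega]; exact aux_mul1_lt_one ha hb (ht m) (hs m) hμ1 hμ12
  have hgt2 : ∀ m : ℝ, 1 < omegaM p c1 c2 μ1 μ2 l1 l2 m * μ2 := by
    intro m; rw [homega]; exact aux_one_lt_mul2 ha hb (ht m) (hs m) hμ1 hμ12
  have hgap : ∀ m : ℝ, max a0 0 < m → 1 - omegaM p c1 c2 μ1 μ2 l1 l2 m * μ1 ≤ ε / c1 := by
    intro m hm
    have h1 : 1 - omegaM p c1 c2 μ1 μ2 l1 l2 m * μ1 ≤ C * (l2 ^ (2 * m) / l1 ^ (2 * m)) := by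
      rw [homega]; exact aux_gap ha hb (ht m) (hs m) hμ1 hμ12
    have h2 : C * r ^ (2 * m) < ε / c1 :=
      ha0 m (le_of_lt (lt_of_le_of_lt (le_max_left a0 0) hm))
    rw [hrat m] at h1
    linarith
  -- monotonicity of ω
  have hmono : omegaM p c1 c2 μ1 μ2 l1 l2 m1 < omegaM p c1 c2 μ1 μ2 l1 l2 m2 := by
    rw [homega, homega]
    apply aux_mono ha hb (ht m1) (hs m1) (ht m2) (hs m2) hμ1 hμ12
    have h2m : 2 * m2 = 2 * m1 + 2 * (m2 - m1) := by ring
    have e1 : l1 ^ (2 * m2) = l1 ^ (2 * m1) * l1 ^ (2 * (m2 - m1)) := by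
      rw [h2m, Real.rpow_add hl1pos]
    have e2 : l2 ^ (2 * m2) = l2 ^ (2 * m1) * l2 ^ (2 * (m2 - m1)) := by
      rw [h2m, Real.rpow_add hl2pos]
    have hd : l2 ^ (2 * (m2 - m1)) < l1 ^ (2 * (m2 - m1)) :=
      Real.rpow_lt_rpow hl2pos.le hl21 (by linarith)
    rw [e1, e2]
    nlinarith [mul_pos (ht m1) (hs m1), hd, ht m1, hs m1]
  -- assemble
  have e1 : Leps ε c1 μ1 l1 (omegaM p c1 c2 μ1 μ2 l1 l2 m1) = 0 :=
    Leps1_eq_zero hc1 hl1pos hl1lt (hlt1 m1) (hgap m1 hm1)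
  have e2 : Leps ε c1 μ1 l1 (omegaM p c1 c2 μ1 μ2 l1 l2 m2) = 0 :=
    Leps1_eq_zero hc1 hl1pos hl1lt (hlt1 m2) (hgap m2 hm2)
  have e3 : Leps ε c2 μ2 l2 (omegaM p c1 c2 μ1 μ2 l1 l2 m1) ≤
      Leps ε c2 μ2 l2 (omegaM p c1 c2 μ1 μ2 l1 l2 m2) :=
    Leps2_mono hc2 hμ2pos hl2pos hl2lt1 hε (hgt2 m1) hmono
  simp only [Eeps, e1, e2]
  have h4 : (0:ℝ) ≤ 1 - p := by linarith
  have := mul_le_mul_of_nonneg_left e3 h4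
  linarith
end

section
/- For every ε > 0 and every M > 0, there exist constants c1 > 0, c2 > 0 and a probability p ∈ (0, 1) such that for every real m ≥ 0 one has E_ε(ω_m) > M; that is, the expected iteration count achieved by the minimizers of the solution-error loss can be made arbitrarily large uniformly over all numbers of training iterations m. -/
/-- The expected iteration count achieved by the minimizers of the solution-error
loss can be made arbitrarily large, uniformly over all training iteration numbers. -/
theorem Eeps_omegaM_unbounded (μ1 μ2 l1 l2 : ℝ)
    (hμ1 : 0 < μ1) (hμ12 : μ1 < μ2) (hμ2 : μ2 < 2)
    (hl1 : l1 = 1 - μ1 / 2) (hl2 : l2 = 1 - μ2 / 2)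
    (ε M : ℝ) (hε : 0 < ε) (hM : 0 < M) :
    ∃ c1 c2 p : ℝ, 0 < c1 ∧ 0 < c2 ∧ 0 < p ∧ p < 1 ∧
      ∀ m : ℝ, 0 ≤ m →
        Eeps p ε c1 c2 μ1 μ2 l1 l2 (omegaM p c1 c2 μ1 μ2 l1 l2 m) > M := by
  have hμ2pos : 0 < μ2 := hμ1.trans hμ12
  have hl2pos : 0 < l2 := by rw [hl2]; linarith
  have hl2lt1 : l2 < 1 := by rw [hl2]; linarith
  have hl21 : l2 < l1 := by rw [hl1, hl2]; linarith
  have hl1pos : 0 < l1 := hl2pos.trans hl21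
  have hlog2 : Real.log l2 < 0 := Real.log_neg hl2pos hl2lt1
  set δ : ℝ := μ1 * (μ2 - μ1) / (μ1 ^ 2 + μ2 ^ 2) with hδdef
  have hδpos : 0 < δ := by
    apply div_pos (mul_pos hμ1 (by linarith)) (by positivity)
  set c : ℝ := ε / δ * Real.exp (2 * M * (-Real.log l2) + 1) with hcdef
  have hcpos : 0 < c := by positivity
  refine ⟨c, c, 1/2, hcpos, hcpos, by norm_num, by norm_num, ?_⟩
  intro m hm
  set a : ℝ := l1 ^ (2 * m) with hadef
  set b : ℝ := l2 ^ (2 * m) with hbdef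
  have ha : 0 < a := Real.rpow_pos_of_pos hl1pos _
  have hb : 0 < b := Real.rpow_pos_of_pos hl2pos _
  have hba : b ≤ a := Real.rpow_le_rpow hl2pos.le hl21.le (by linarith)
  have hD2 : 0 < μ1 ^ 2 * a + μ2 ^ 2 * b := by positivity
  have hωeq : omegaM (1/2) c c μ1 μ2 l1 l2 m
      = (μ1 * a + μ2 * b) / (μ1 ^ 2 * a + μ2 ^ 2 * b) := by
    unfold omegaM
    rw [← hadef, ← hbdef, div_eq_div_iff (by positivity) hD2.ne']
    ring
  set ω : ℝ := (μ1 * a + μ2 * b) / (μ1 ^ 2 * a + μ2 ^ 2 * b) with hωdef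
  have hd : ω * μ2 - 1 = μ1 * (μ2 - μ1) * a / (μ1 ^ 2 * a + μ2 ^ 2 * b) := by
    rw [hωdef]
    field_simp
    ring
  have hdδ : δ ≤ ω * μ2 - 1 := by
    rw [hd, hδdef, div_le_div_iff₀ (by positivity) hD2]
    nlinarith [mul_nonneg (mul_nonneg (mul_pos hμ1 (sub_pos.mpr hμ12)).le (sq_nonneg μ2)) (sub_nonneg.mpr hba)]
  have hdpos : 0 < ω * μ2 - 1 := lt_of_lt_of_le hδpos hdδ
  have hne : ω * μ2 ≠ 1 := by intro h; rw [h] at hdpos; simp at hdpos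
  -- lower bound for Leps of task 2
  have hcd : ε * Real.exp (2 * M * (-Real.log l2) + 1) ≤ c * (ω * μ2 - 1) := by
    have : c * δ = ε * Real.exp (2 * M * (-Real.log l2) + 1) := by
      rw [hcdef]; field_simp
    rw [← this]
    exact mul_le_mul_of_nonneg_left hdδ hcpos.le
  have habs : |ω * μ2 - 1| = ω * μ2 - 1 := abs_of_pos hdpos
  have hlogle : Real.log (ε / (c * |ω * μ2 - 1|)) ≤ -(2 * M * (-Real.log l2) + 1) := by
    rw [habs, Real.log_le_iff_le_exp (by positivity)]
    rw [div_le_iff₀ (by positivity)]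
    calc ε = ε * Real.exp (2 * M * (-Real.log l2) + 1)
              * Real.exp (-(2 * M * (-Real.log l2) + 1)) := by
            have h0 : 2 * M * (-Real.log l2) + 1 + -(2 * M * (-Real.log l2) + 1) = 0 := by ring
            rw [mul_assoc, ← Real.exp_add, h0, Real.exp_zero, mul_one]
      _ ≤ c * (ω * μ2 - 1) * Real.exp (-(2 * M * (-Real.log l2) + 1)) := by
            exact mul_le_mul_of_nonneg_right hcd (Real.exp_pos _).le
      _ = Real.exp (-(2 * M * (-Real.log l2) + 1)) * (c * (ω * μ2 - 1)) := by ring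
  have hL2 : 2 * M < Real.log (ε / (c * |ω * μ2 - 1|)) / Real.log l2 := by
    have h1 : -(2 * M * (-Real.log l2) + 1) / Real.log l2
        ≤ Real.log (ε / (c * |ω * μ2 - 1|)) / Real.log l2 := by
      exact (div_le_div_right_of_neg hlog2).mpr hlogle
    have h2 : -(2 * M * (-Real.log l2) + 1) / Real.log l2 = 2 * M + 1 / (-Real.log l2) := by
      field_simp [hlog2.ne]
      ring
    have h3 : 0 < 1 / (-Real.log l2) := by
      have := neg_pos.mpr hlog2; positivity
    linarith
  have hLeps2 : 2 * M < Leps ε c μ2 l2 ω := by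
    unfold Leps
    rw [if_neg hne]
    exact lt_of_lt_of_le hL2 (le_max_right _ _)
  have hLeps1 : 0 ≤ Leps ε c μ1 l1 ω := by
    unfold Leps
    split
    · exact le_refl 0
    · exact le_max_left _ _
  rw [hωeq]
  unfold Eeps
  linarith
end
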